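/- arXiv:1004.0723 — 8 statements merged into one kernel-verified Lean document; each statement's English description precedes it below -/
import Mathlib

section
/- Let Ω be a set and let Σ be a subsemigroup of ℝ₊^Ω containing 0 which is +,−-closed, equipped with the topology induced from the product topology on ℝ^Ω. Let V = {V_s}_{s∈Σ} be a semigroup of isometries on a complex Hilbert space K which is weakly continuous (i.e., s ↦ ⟨V_s x, y⟩ is continuous on Σ for all x,y ∈ K). Then the minimal regular unitary dilation U = {U_s}_{s∈Σ} of V (acting on a Hilbert space L ⊇ K) is strongly continuous, i.e., s ↦ U_s x is continuous for every x ∈ L. -/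
open ContinuousLinearMap

/-- For `s : Ω → ℝ`, the positive part `s₊ : j ↦ max (s j) 0`. -/
noncomputable def posPart' {Ω : Type*} (s : Ω → ℝ) : Ω → ℝ := fun j => max (s j) 0

/-- For `s : Ω → ℝ`, the negative part `s₋ = s₊ - s`. -/
noncomputable def negPart' {Ω : Type*} (s : Ω → ℝ) : Ω → ℝ := posPart' s - s

open Filter Topology in
/-- weak continuity plus constant norm implies strong continuity (within a set). -/
lemma strongOfWeak {H α : Type*} [NormedAddCommGroup H] [InnerProductSpace ℂ H]
    [TopologicalSpace α] {f : α → H} {S : Set α} {t : α}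
    (hnorm : ∀ s ∈ S, ‖f s‖ = ‖f t‖)
    (hweak : Filter.Tendsto (fun s => (inner ℂ (f s) (f t) : ℂ)) (nhdsWithin t S)
      (nhds (inner ℂ (f t) (f t) : ℂ))) :
    ContinuousWithinAt f S t := by
  show Filter.Tendsto f (nhdsWithin t S) (nhds (f t))
  rw [tendsto_iff_norm_sub_tendsto_zero]
  have hre : Filter.Tendsto
      (fun s => 2 * ‖f t‖ ^ 2 - 2 * RCLike.re (inner ℂ (f s) (f t) : ℂ))
      (nhdsWithin t S) (nhds 0) := by
    have h1 : Filter.Tendsto (fun s => RCLike.re (inner ℂ (f s) (f t) : ℂ))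
        (nhdsWithin t S) (nhds (RCLike.re (inner ℂ (f t) (f t) : ℂ))) :=
      (RCLike.continuous_re.tendsto _).comp hweak
    rw [inner_self_eq_norm_sq] at h1
    have h2 := (tendsto_const_nhds (x := (2 * ‖f t‖ ^ 2 : ℝ))
        (f := nhdsWithin t S)).sub (h1.const_mul 2)
    simpa using h2
  have hsq : Filter.Tendsto
      (fun s => Real.sqrt (2 * ‖f t‖ ^ 2 - 2 * RCLike.re (inner ℂ (f s) (f t) : ℂ)))
      (nhdsWithin t S) (nhds 0) := by
    have := (Real.continuous_sqrt.tendsto 0).comp hre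
    simpa [Function.comp_def] using this
  apply Filter.Tendsto.congr' _ hsq
  filter_upwards [self_mem_nhdsWithin] with s hs
  have h2 : ‖f s - f t‖ ^ 2 = 2 * ‖f t‖ ^ 2 - 2 * RCLike.re (inner ℂ (f s) (f t) : ℂ) := by
    rw [@norm_sub_sq ℂ, hnorm s hs]; ring
  rw [← h2, Real.sqrt_sq (norm_nonneg _)]

/-- shuffle six commuting-ish factors. -/
lemma mul_shuffle6 {R : Type*} [Monoid R] (A B C D E F : R)
    (hBC : B * C = C * B) (hDE : D * E = E * D) (hBE : B * E = E * B) :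
    A * B * C * D * E * F = (A * C * E) * (B * (D * F)) := by
  have h1 : ∀ x : R, B * (C * x) = C * (B * x) := fun x => by
    rw [← mul_assoc, hBC, mul_assoc]
  have h2 : ∀ x : R, D * (E * x) = E * (D * x) := fun x => by
    rw [← mul_assoc, hDE, mul_assoc]
  have h3 : ∀ x : R, B * (E * x) = E * (B * x) := fun x => by
    rw [← mul_assoc, hBE, mul_assoc]
  simp only [mul_assoc]
  rw [h1, h2, h3]

lemma continuous_posPart' {Ω : Type*} : Continuous (posPart' (Ω := Ω)) :=
  continuous_pi fun j => (continuous_apply j).max continuous_const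

lemma continuous_negPart' {Ω : Type*} : Continuous (negPart' (Ω := Ω)) :=
  continuous_posPart'.sub continuous_id

set_option maxHeartbeats 2000000 in
open Filter Topology in
/-- If a semigroup of isometries `V` over a `+,-`-closed subsemigroup `Sig ⊆ ℝ₊^Ω`
(with the topology induced from the product topology on `ℝ^Ω`) is weakly continuous,
then its minimal regular unitary dilation `U` is strongly continuous. -/
theorem minimal_regular_unitary_dilation_of_weakly_continuous_is_strongly_continuous
    {Ω : Type} {K : Type} [NormedAddCommGroup K] [InnerProductSpace ℂ K]
    [CompleteSpace K]
    {L : Type} [NormedAddCommGroup L] [InnerProductSpace ℂ L] [CompleteSpace L]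
    (Sig : Set (Ω → ℝ))
    (hnn : ∀ s ∈ Sig, ∀ j : Ω, 0 ≤ s j)
    (h0 : (0 : Ω → ℝ) ∈ Sig)
    (hadd : ∀ a ∈ Sig, ∀ b ∈ Sig, a + b ∈ Sig)
    (hpm : ∀ a ∈ Sig, ∀ b ∈ Sig, posPart' (a - b) ∈ Sig ∧ negPart' (a - b) ∈ Sig)
    -- `V` is a semigroup of isometries on `K` over `Sig`
    (V : (Ω → ℝ) → K →L[ℂ] K)
    (hV0 : V 0 = 1)
    (hVsg : ∀ a ∈ Sig, ∀ b ∈ Sig, V (a + b) = V a ∘L V b)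
    (hViso : ∀ s ∈ Sig, ∀ x : K, ‖V s x‖ = ‖x‖)
    -- `V` is weakly continuous on `Sig` (product topology on `Ω → ℝ`)
    (hVweak : ∀ x y : K, ContinuousOn (fun s : Ω → ℝ => (inner ℂ (V s x) y : ℂ)) Sig)
    -- `U` is a minimal regular unitary dilation of `V` on `L ⊇ K`
    (ι : K →L[ℂ] L) (hι : ∀ x : K, ‖ι x‖ = ‖x‖)
    (U : (Ω → ℝ) → L →L[ℂ] L)
    (hU0 : U 0 = 1)
    (hUsg : ∀ a ∈ Sig, ∀ b ∈ Sig, U (a + b) = U a ∘L U b)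
    (hUun : ∀ s ∈ Sig, U s ∘L adjoint (U s) = 1 ∧ adjoint (U s) ∘L U s = 1)
    (hreg : ∀ a ∈ Sig, ∀ b ∈ Sig,
      adjoint ι ∘L (adjoint (U (negPart' (a - b))) ∘L U (posPart' (a - b))) ∘L ι
        = adjoint (V (negPart' (a - b))) ∘L V (posPart' (a - b)))
    (hmin : (Submodule.span ℂ {x : L | ∃ a ∈ Sig, ∃ b ∈ Sig, ∃ k : K,
        x = adjoint (U (negPart' (a - b)))
              (U (posPart' (a - b)) (ι k))}).topologicalClosure = ⊤) :
    -- then `U` is strongly continuous on `Sig`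
    ∀ x : L, ContinuousOn (fun s : Ω → ℝ => U s x) Sig := by
  classical
  set M : Set L := {x : L | ∃ a ∈ Sig, ∃ b ∈ Sig, ∃ k : K,
      x = adjoint (U (negPart' (a - b))) (U (posPart' (a - b)) (ι k))} with hM
  -- multiplicative forms
  have hmul : ∀ a ∈ Sig, ∀ b ∈ Sig, U (a + b) = U a * U b := fun a ha b hb =>
    (hUsg a ha b hb).trans (mul_def _ _).symm
  have hUU : ∀ s ∈ Sig, U s * adjoint (U s) = 1 := fun s hs =>
    (mul_def _ _).trans (hUun s hs).1
  have hUU' : ∀ s ∈ Sig, adjoint (U s) * U s = 1 := fun s hs =>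
    (mul_def _ _).trans (hUun s hs).2
  have comm : ∀ a ∈ Sig, ∀ b ∈ Sig, U a * U b = U b * U a := by
    intro a ha b hb
    rw [← hmul a ha b hb, ← hmul b hb a ha, add_comm]
  have commStar : ∀ a ∈ Sig, ∀ b ∈ Sig,
      U a * adjoint (U b) = adjoint (U b) * U a := by
    intro a ha b hb
    calc U a * adjoint (U b)
        = (adjoint (U b) * U b) * (U a * adjoint (U b)) := by
          rw [hUU' b hb, one_mul]
      _ = adjoint (U b) * (U b * U a) * adjoint (U b) := by simp only [mul_assoc]
      _ = adjoint (U b) * (U a * U b) * adjoint (U b) := by rw [comm b hb a ha]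
      _ = adjoint (U b) * U a * (U b * adjoint (U b)) := by simp only [mul_assoc]
      _ = adjoint (U b) * U a := by rw [hUU b hb, mul_one]
  -- unitaries are isometric
  have hUiso : ∀ s ∈ Sig, ∀ x : L, ‖U s x‖ = ‖x‖ := by
    intro s hs x
    have h1 : adjoint (U s) (U s x) = x := by
      have := congrArg (fun T : L →L[ℂ] L => T x) (hUun s hs).2
      simpa using this
    have h2 : (inner ℂ (U s x) (U s x) : ℂ) = inner ℂ x x := by
      calc (inner ℂ (U s x) (U s x) : ℂ)
          = inner ℂ x (adjoint (U s) (U s x)) := (adjoint_inner_right _ _ _).symm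
        _ = inner ℂ x x := by rw [h1]
    have h3 : RCLike.re (inner ℂ (U s x) (U s x) : ℂ)
        = RCLike.re (inner ℂ x x : ℂ) := by rw [h2]
    rw [inner_self_eq_norm_sq, inner_self_eq_norm_sq] at h3
    calc ‖U s x‖ = Real.sqrt (‖U s x‖ ^ 2) := (Real.sqrt_sq (norm_nonneg _)).symm
      _ = Real.sqrt (‖x‖ ^ 2) := by rw [h3]
      _ = ‖x‖ := Real.sqrt_sq (norm_nonneg _)
  -- key operator identity
  have key : ∀ c ∈ Sig, ∀ d ∈ Sig,
      adjoint (U d) * U c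
        = adjoint (U (negPart' (c - d))) * U (posPart' (c - d)) := by
    intro c hc d hd
    obtain ⟨hp, hn⟩ := hpm c hc d hd
    have hfun : d + posPart' (c - d) = c + negPart' (c - d) := by
      funext j
      simp only [posPart', negPart', Pi.add_apply, Pi.sub_apply]
      ring
    have h1 : U d * U (posPart' (c - d)) = U c * U (negPart' (c - d)) := by
      rw [← hmul d hd _ hp, ← hmul c hc _ hn, hfun]
    calc adjoint (U d) * U c
        = adjoint (U d) * U c * (U (negPart' (c - d)) * adjoint (U (negPart' (c - d)))) := by
          rw [hUU _ hn, mul_one]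
      _ = adjoint (U d) * (U c * U (negPart' (c - d))) * adjoint (U (negPart' (c - d))) := by
          simp only [mul_assoc]
      _ = adjoint (U d) * (U d * U (posPart' (c - d))) * adjoint (U (negPart' (c - d))) := by
          rw [h1]
      _ = (adjoint (U d) * U d) * (U (posPart' (c - d)) * adjoint (U (negPart' (c - d)))) := by
          simp only [mul_assoc]
      _ = U (posPart' (c - d)) * adjoint (U (negPart' (c - d))) := by
          rw [hUU' d hd, one_mul]
      _ = adjoint (U (negPart' (c - d))) * U (posPart' (c - d)) :=
          commStar _ hp _ hn
  -- V is strongly continuous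
  have hVstrongOn : ∀ z : K, ContinuousOn (fun u : Ω → ℝ => V u z) Sig := by
    intro z u₀ hu₀
    apply strongOfWeak
    · intro u hu; rw [hViso u hu, hViso u₀ hu₀]
    · exact (hVweak z (V u₀ z)) u₀ hu₀
  -- matrix elements of U between generators are continuous
  have matrixCont : ∀ t ∈ Sig, ∀ x ∈ M, ∀ y ∈ M,
      ContinuousOn (fun s : Ω → ℝ => (inner ℂ (U s x) (U t y) : ℂ)) Sig := by
    intro t ht x hx y hy
    obtain ⟨a, ha, b, hb, k, rfl⟩ := hx
    obtain ⟨a', ha', b', hb', k', rfl⟩ := hy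
    set p := posPart' (a - b) with hp_def
    set n := negPart' (a - b) with hn_def
    set p' := posPart' (a' - b') with hp'_def
    set n' := negPart' (a' - b') with hn'_def
    obtain ⟨hp, hn⟩ := hpm a ha b hb
    obtain ⟨hp', hn'⟩ := hpm a' ha' b' hb'
    set c := n + t + p' with hc_def
    have hc : c ∈ Sig := hadd _ (hadd _ hn _ ht) _ hp'
    -- pointwise value
    have hval : ∀ s ∈ Sig,
        (inner ℂ (U s (adjoint (U n) (U p (ι k)))) (U t (adjoint (U n') (U p' (ι k')))) : ℂ)
          = inner ℂ (V (negPart' (c - (p + s + n'))) k)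
              (V (posPart' (c - (p + s + n'))) k') := by
      intro s hs
      set d := p + s + n' with hd_def
      have hd : d ∈ Sig := hadd _ (hadd _ hp _ hs) _ hn'
      have hadj : adjoint (U s * (adjoint (U n) * U p))
          = adjoint (U p) * U n * adjoint (U s) := by
        simp only [mul_def, adjoint_comp, adjoint_adjoint]
      have hW : adjoint (U p) * U n * adjoint (U s) * U t * adjoint (U n') * U p'
          = adjoint (U d) * U c := by
        rw [mul_shuffle6 (adjoint (U p)) (U n) (adjoint (U s)) (U t) (adjoint (U n'))
          (U p') (commStar n hn s hs) (commStar t ht n' hn') (commStar n hn n' hn')]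
        congr 1
        · have hUd : U d = U n' * (U s * U p) := by
            rw [hd_def, show p + s + n' = n' + (s + p) by abel,
              hmul n' hn' (s + p) (hadd s hs p hp), hmul s hs p hp]
          rw [hUd]
          simp only [mul_def, adjoint_comp]
        · rw [hc_def, add_assoc, hmul n hn (t + p') (hadd t ht p' hp'),
            hmul t ht p' hp']
      have hop : adjoint (U s * (adjoint (U n) * U p)) * (U t * (adjoint (U n') * U p'))
          = adjoint (U (negPart' (c - d))) * U (posPart' (c - d)) := by
        rw [hadj]
        have hassoc : adjoint (U p) * U n * adjoint (U s) * (U t * (adjoint (U n') * U p'))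
            = adjoint (U p) * U n * adjoint (U s) * U t * adjoint (U n') * U p' := by
          simp only [mul_assoc]
        rw [hassoc, hW, key c hc d hd]
      have hregapp : adjoint ι ((adjoint (U (negPart' (c - d))) * U (posPart' (c - d))) (ι k'))
          = adjoint (V (negPart' (c - d))) (V (posPart' (c - d)) k') := by
        have h := congrArg (fun T : K →L[ℂ] K => T k') (hreg c hc d hd)
        simpa only [comp_apply, mul_apply_eq_comp] using h
      calc (inner ℂ (U s (adjoint (U n) (U p (ι k)))) (U t (adjoint (U n') (U p' (ι k')))) : ℂ)
          = inner ℂ ((U s * (adjoint (U n) * U p)) (ι k))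
              ((U t * (adjoint (U n') * U p')) (ι k')) := rfl
        _ = inner ℂ (ι k) ((adjoint (U s * (adjoint (U n) * U p)))
              ((U t * (adjoint (U n') * U p')) (ι k'))) :=
            (adjoint_inner_right _ _ _).symm
        _ = inner ℂ (ι k) ((adjoint (U s * (adjoint (U n) * U p))
              * (U t * (adjoint (U n') * U p'))) (ι k')) := rfl
        _ = inner ℂ (ι k) ((adjoint (U (negPart' (c - d))) * U (posPart' (c - d))) (ι k')) := by
            rw [hop]
        _ = inner ℂ k (adjoint ι ((adjoint (U (negPart' (c - d)))
              * U (posPart' (c - d))) (ι k'))) :=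
            (adjoint_inner_right ι _ _).symm
        _ = inner ℂ k (adjoint (V (negPart' (c - d))) (V (posPart' (c - d)) k')) := by
            rw [hregapp]
        _ = inner ℂ (V (negPart' (c - d)) k) (V (posPart' (c - d)) k') :=
            adjoint_inner_right _ _ _
    -- continuity of the V-side expression
    have hφcont : Continuous (fun u : Ω → ℝ => c - (p + u + n')) := by
      exact continuous_const.sub ((continuous_const.add continuous_id).add continuous_const)
    have hOn1 : ContinuousOn (fun u : Ω → ℝ => V (negPart' (c - (p + u + n'))) k) Sig := by
      have hmaps : Set.MapsTo (fun u : Ω → ℝ => negPart' (c - (p + u + n'))) Sig Sig :=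
        fun u hu => (hpm c hc _ (hadd _ (hadd _ hp _ hu) _ hn')).2
      exact (hVstrongOn k).comp (continuous_negPart'.comp hφcont).continuousOn hmaps
    have hOn2 : ContinuousOn (fun u : Ω → ℝ => V (posPart' (c - (p + u + n'))) k') Sig := by
      have hmaps : Set.MapsTo (fun u : Ω → ℝ => posPart' (c - (p + u + n'))) Sig Sig :=
        fun u hu => (hpm c hc _ (hadd _ (hadd _ hp _ hu) _ hn')).1
      exact (hVstrongOn k').comp (continuous_posPart'.comp hφcont).continuousOn hmaps
    have hcont : ContinuousOn (fun s : Ω → ℝ =>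
        (inner ℂ (V (negPart' (c - (p + s + n'))) k)
          (V (posPart' (c - (p + s + n'))) k') : ℂ)) Sig :=
      (continuous_inner (𝕜 := ℂ)).comp_continuousOn (hOn1.prodMk hOn2)
    exact hcont.congr hval
  -- extend to the span by bilinearity
  have claimA : ∀ t ∈ Sig, ∀ x ∈ Submodule.span ℂ M, ∀ y ∈ Submodule.span ℂ M,
      ContinuousOn (fun s : Ω → ℝ => (inner ℂ (U s x) (U t y) : ℂ)) Sig := by
    intro t ht x hx y hy
    refine Submodule.span_induction₂
      (p := fun x y _ _ => ContinuousOn (fun s : Ω → ℝ => (inner ℂ (U s x) (U t y) : ℂ)) Sig)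
      ?_ ?_ ?_ ?_ ?_ ?_ ?_ hx hy
    · exact fun x y hx hy => matrixCont t ht x hx y hy
    · intro y hy
      simp only [map_zero, inner_zero_left]
      exact continuousOn_const
    · intro x hx
      simp only [map_zero, inner_zero_right]
      exact continuousOn_const
    · intro x y z hx hy hz h1 h2
      simpa only [map_add, inner_add_left, Pi.add_def] using h1.add h2
    · intro x y z hx hy hz h1 h2
      simpa only [map_add, inner_add_right, Pi.add_def] using h1.add h2
    · intro r x y hx hy h
      simpa only [map_smul, inner_smul_left, Pi.mul_def] using continuousOn_const.mul h
    · intro r x y hx hy h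
      simpa only [map_smul, inner_smul_right, Pi.mul_def] using continuousOn_const.mul h
  -- strong continuity on the span
  have claimB : ∀ x ∈ Submodule.span ℂ M, ContinuousOn (fun s : Ω → ℝ => U s x) Sig := by
    intro x hx t ht
    apply strongOfWeak
    · intro s hs; rw [hUiso s hs, hUiso t ht]
    · exact (claimA t ht x hx x hx) t ht
  -- extend to the closure
  intro x
  have hxcl : x ∈ closure ((Submodule.span ℂ M : Submodule ℂ L) : Set L) := by
    have hx : x ∈ (Submodule.span ℂ M).topologicalClosure := by rw [hmin]; trivial
    exact hx
  obtain ⟨y, hy, hlim⟩ := mem_closure_iff_seq_limit.1 hxcl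
  have hnorm0 : Filter.Tendsto (fun nn : ℕ => ‖y nn - x‖) Filter.atTop (nhds 0) :=
    tendsto_iff_norm_sub_tendsto_zero.1 hlim
  have hunif : TendstoUniformlyOn (fun nn : ℕ => fun s : Ω → ℝ => U s (y nn))
      (fun s : Ω → ℝ => U s x) Filter.atTop Sig := by
    rw [Metric.tendstoUniformlyOn_iff]
    intro ε hε
    filter_upwards [hnorm0.eventually (gt_mem_nhds hε)] with nn hnn s hs
    have : dist (U s x) (U s (y nn)) = ‖y nn - x‖ := by
      rw [dist_eq_norm, ← map_sub, hUiso s hs, norm_sub_rev]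
    rw [this]
    exact hnn
  exact hunif.continuousOn (Filter.Eventually.of_forall fun nn => claimB (y nn) (hy nn)).frequently
end

section
/- Let Ω be a set and let Σ be a subsemigroup of ℝ₊^Ω containing 0 which is +,−-closed, and let T = {T_s}_{s∈Σ} be a semigroup of contractions on a complex Hilbert space H (T_0 = I, T_s T_t = T_{s+t}, ‖T_s‖ ≤ 1). If T has a regular isometric dilation, then T has a regular unitary dilation. -/
open ContinuousLinearMap
set_option maxHeartbeats 1000000

noncomputable section RegUnitDilAux

open UniformSpace

local notation "⟪" x ", " y "⟫" => @inner ℂ _ _ x y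

/-- Data of a semigroup of isometries over a unital subsemigroup of `ℝ₊^Ω`. -/
structure RUDData (Ω K : Type) [NormedAddCommGroup K] [InnerProductSpace ℂ K] where
  Sig : Set (Ω → ℝ)
  h0 : (0 : Ω → ℝ) ∈ Sig
  hadd : ∀ a ∈ Sig, ∀ b ∈ Sig, a + b ∈ Sig
  W : (Ω → ℝ) → K →L[ℂ] K
  hW0 : W 0 = 1
  hWsg : ∀ a ∈ Sig, ∀ b ∈ Sig, W (a + b) = W a ∘L W b
  hWiso : ∀ s ∈ Sig, ∀ x : K, ‖W s x‖ = ‖x‖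

namespace RUDData

variable {Ω K : Type} [NormedAddCommGroup K] [InnerProductSpace ℂ K] (P : RUDData Ω K)

/-- The index semigroup as a subtype. -/
def SS := {s : Ω → ℝ // s ∈ P.Sig}

instance : Add P.SS := ⟨fun a b => ⟨a.1 + b.1, P.hadd _ a.2 _ b.2⟩⟩
instance : Zero P.SS := ⟨⟨0, P.h0⟩⟩

instance : AddCommMonoid P.SS where
  add_assoc a b c := Subtype.ext (add_assoc a.1 b.1 c.1)
  zero_add a := Subtype.ext (zero_add a.1)
  add_zero a := Subtype.ext (add_zero a.1)
  add_comm a b := Subtype.ext (add_comm a.1 b.1)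
  nsmul := nsmulRec

/-- The isometry indexed by an element of the subtype. -/
def w (s : P.SS) : K →L[ℂ] K := P.W s.1

/-- `w s` as a linear isometry. -/
def wIso (s : P.SS) : K →ₗᵢ[ℂ] K :=
  ⟨(P.w s : K →ₗ[ℂ] K), fun x => P.hWiso s.1 s.2 x⟩

lemma w_inner (s : P.SS) (x y : K) : ⟪P.w s x, P.w s y⟫ = ⟪x, y⟫ :=
  (P.wIso s).inner_map_map x y

lemma w_inj (s : P.SS) : Function.Injective (P.w s) :=
  (P.wIso s).injective

lemma w_w (a b : P.SS) (x : K) : P.w a (P.w b x) = P.w (a + b) x := by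
  show P.W a.1 (P.W b.1 x) = P.W (a.1 + b.1) x
  rw [P.hWsg a.1 a.2 b.1 b.2]; rfl

lemma w_comm (a b : P.SS) (x : K) : P.w a (P.w b x) = P.w b (P.w a x) := by
  rw [w_w, w_w, add_comm]

lemma w_zero (x : K) : P.w 0 x = x := by
  show P.W 0 x = x
  rw [P.hW0]; rfl

lemma w_cancel {a b : P.SS} {x y : K} (h : P.w a x = P.w b y) (c : P.SS) :
    P.w (c + a) x = P.w (c + b) y := by rw [← w_w, ← w_w, h]

lemma w_index {a b : P.SS} (h : a = b) (x : K) : P.w a x = P.w b x := by rw [h]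

/-- Carrier for the direct limit construction. -/
abbrev X (P : RUDData Ω K) := P.SS × K

instance setoidX : Setoid P.X where
  r p q := P.w q.1 p.2 = P.w p.1 q.2
  iseqv := by
    refine ⟨fun p => rfl, fun h => h.symm, ?_⟩
    rintro ⟨s, x⟩ ⟨t, y⟩ ⟨u, z⟩ h1 h2
    apply P.w_inj t
    calc P.w t (P.w u x) = P.w u (P.w t x) := P.w_comm t u x
      _ = P.w u (P.w s y) := by rw [show P.w t x = P.w s y from h1]
      _ = P.w s (P.w u y) := P.w_comm u s y
      _ = P.w s (P.w t z) := by rw [show P.w u y = P.w t z from h2]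
      _ = P.w t (P.w s z) := P.w_comm s t z

/-- The algebraic direct limit. -/
def Q (P : RUDData Ω K) := Quotient P.setoidX

def qmk (s : P.SS) (x : K) : P.Q := Quotient.mk P.setoidX (s, x)

lemma sound {s t : P.SS} {x y : K} (h : P.w t x = P.w s y) : P.qmk s x = P.qmk t y :=
  Quotient.sound h

lemma ind {motive : P.Q → Prop} (h : ∀ s x, motive (P.qmk s x)) : ∀ q, motive q :=
  fun q => Quotient.inductionOn q (fun p => h p.1 p.2)

instance : Zero P.Q := ⟨P.qmk 0 0⟩

lemma zero_def : (0 : P.Q) = P.qmk 0 0 := rfl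

lemma addWD : ∀ (p p' : P.X), p ≈ p' → ∀ (q q' : P.X), q ≈ q' →
    (((p.1 + q.1 : P.SS), P.w q.1 p.2 + P.w p.1 q.2) : P.X) ≈
      ((p'.1 + q'.1 : P.SS), P.w q'.1 p'.2 + P.w p'.1 q'.2) := by
  rintro ⟨s, x⟩ ⟨s', x'⟩ h1 ⟨t, y⟩ ⟨t', y'⟩ h2
  have h1' : P.w s' x = P.w s x' := h1
  have h2' : P.w t' y = P.w t y' := h2
  show P.w (s' + t') (P.w t x + P.w s y) = P.w (s + t) (P.w t' x' + P.w s' y')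
  have e1 : P.w (s' + t' + t) x = P.w (s + t + t') x' := by
    calc P.w (s' + t' + t) x = P.w (t' + t + s') x := P.w_index (by abel) x
      _ = P.w (t' + t + s) x' := P.w_cancel h1' _
      _ = P.w (s + t + t') x' := P.w_index (by abel) x'
  have e2 : P.w (s' + t' + s) y = P.w (s + t + s') y' := by
    calc P.w (s' + t' + s) y = P.w (s' + s + t') y := P.w_index (by abel) y
      _ = P.w (s' + s + t) y' := P.w_cancel h2' _
      _ = P.w (s + t + s') y' := P.w_index (by abel) y'
  rw [map_add, map_add, P.w_w, P.w_w, P.w_w, P.w_w, e1, e2]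

instance : Add P.Q :=
  ⟨Quotient.map₂ (fun p q => ((p.1 + q.1 : P.SS), P.w q.1 p.2 + P.w p.1 q.2)) P.addWD⟩

@[simp] lemma qmk_add (s t : P.SS) (x y : K) :
    P.qmk s x + P.qmk t y = P.qmk (s + t) (P.w t x + P.w s y) := rfl

instance : Neg P.Q :=
  ⟨Quotient.map (fun p => (p.1, -p.2)) (by
    rintro ⟨s, x⟩ ⟨t, y⟩ h
    show P.w t (-x) = P.w s (-y)
    rw [map_neg, map_neg, show P.w t x = P.w s y from h])⟩

@[simp] lemma qmk_neg (s : P.SS) (x : K) : -P.qmk s x = P.qmk s (-x) := rfl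

instance : SMul ℂ P.Q :=
  ⟨fun c => Quotient.map (fun p => (p.1, c • p.2)) (by
    rintro ⟨s, x⟩ ⟨t, y⟩ h
    show P.w t (c • x) = P.w s (c • y)
    rw [map_smul, map_smul, show P.w t x = P.w s y from h])⟩

@[simp] lemma qmk_smul (c : ℂ) (s : P.SS) (x : K) : c • P.qmk s x = P.qmk s (c • x) := rfl

lemma qmk_index {a b : P.SS} (h : a = b) (x : K) : P.qmk a x = P.qmk b x := by rw [h]

set_option maxHeartbeats 1000000 in
instance : AddCommGroup P.Q where
  add := (· + ·)
  zero := 0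
  neg := Neg.neg
  add_assoc := by
    refine P.ind fun s x => P.ind fun t y => P.ind fun u z => ?_
    rw [qmk_add, qmk_add, qmk_add, qmk_add, qmk_index P (add_assoc s t u)]
    refine congrArg (P.qmk _) ?_
    rw [map_add, map_add, P.w_w, P.w_w, P.w_w, P.w_w,
      P.w_index (add_comm u t) x, P.w_index (add_comm u s) y, add_assoc]
  zero_add := by
    refine P.ind fun s x => ?_
    rw [zero_def, qmk_add, qmk_index P (zero_add s)]
    refine congrArg (P.qmk _) ?_
    rw [map_zero, P.w_zero, zero_add]
  add_zero := by
    refine P.ind fun s x => ?_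
    rw [zero_def, qmk_add, qmk_index P (add_zero s)]
    refine congrArg (P.qmk _) ?_
    rw [map_zero, P.w_zero, add_zero]
  add_comm := by
    refine P.ind fun s x => P.ind fun t y => ?_
    rw [qmk_add, qmk_add, qmk_index P (add_comm t s)]
    refine congrArg (P.qmk _) ?_
    rw [add_comm]
  neg_add_cancel := by
    refine P.ind fun s x => ?_
    rw [qmk_neg, qmk_add, zero_def]
    have : P.w s (-x) + P.w s x = 0 := by rw [map_neg, neg_add_cancel]
    rw [this]
    exact (P.sound (by rw [map_zero, map_zero])).symm
  nsmul := nsmulRec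
  zsmul := zsmulRec

set_option maxHeartbeats 1000000 in
instance : Module ℂ P.Q where
  one_smul := P.ind fun s x => by rw [qmk_smul, one_smul]
  mul_smul c d := P.ind fun s x => by rw [qmk_smul, qmk_smul, qmk_smul, mul_smul]
  smul_zero c := by rw [zero_def, qmk_smul, smul_zero]
  smul_add c := P.ind fun s x => P.ind fun t y => by
    rw [qmk_add, qmk_smul, qmk_smul, qmk_smul, qmk_add]
    refine congrArg (P.qmk _) ?_
    rw [smul_add, map_smul, map_smul]
  add_smul c d := P.ind fun s x => by
    rw [qmk_smul, qmk_smul, qmk_smul, qmk_add]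
    apply P.sound
    rw [add_smul, map_add, map_add, P.w_w, P.w_w]
  zero_smul := P.ind fun s x => by
    rw [qmk_smul, zero_smul, zero_def]
    exact P.sound (by rw [map_zero, map_zero])

lemma innerWD : ∀ (p q p' q' : P.X), p ≈ p' → q ≈ q' →
    ⟪P.w q.1 p.2, P.w p.1 q.2⟫ = ⟪P.w q'.1 p'.2, P.w p'.1 q'.2⟫ := by
  rintro ⟨s, x⟩ ⟨t, y⟩ ⟨s', x'⟩ ⟨t', y'⟩ h1 h2
  have h1' : P.w s' x = P.w s x' := h1
  have h2' : P.w t' y = P.w t y' := h2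
  have e1 : P.w (s' + t' + t) x = P.w (s + t + t') x' := by
    calc P.w (s' + t' + t) x = P.w (t' + t + s') x := P.w_index (by abel) x
      _ = P.w (t' + t + s) x' := P.w_cancel h1' _
      _ = P.w (s + t + t') x' := P.w_index (by abel) x'
  have e2 : P.w (s' + t' + s) y = P.w (s + t + s') y' := by
    calc P.w (s' + t' + s) y = P.w (s' + s + t') y := P.w_index (by abel) y
      _ = P.w (s' + s + t) y' := P.w_cancel h2' _
      _ = P.w (s + t + s') y' := P.w_index (by abel) y'
  calc ⟪P.w t x, P.w s y⟫
      = ⟪P.w (s' + t') (P.w t x), P.w (s' + t') (P.w s y)⟫ := (P.w_inner _ _ _).symm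
    _ = ⟪P.w (s' + t' + t) x, P.w (s' + t' + s) y⟫ := by rw [P.w_w, P.w_w]
    _ = ⟪P.w (s + t + t') x', P.w (s + t + s') y'⟫ := by rw [e1, e2]
    _ = ⟪P.w (s + t) (P.w t' x'), P.w (s + t) (P.w s' y')⟫ := by rw [P.w_w, P.w_w]
    _ = ⟪P.w t' x', P.w s' y'⟫ := P.w_inner _ _ _

def innerQ : P.Q → P.Q → ℂ :=
  Quotient.lift₂ (fun p q => ⟪P.w q.1 p.2, P.w p.1 q.2⟫)
    (fun p q p' q' h1 h2 => P.innerWD p q p' q' h1 h2)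

@[simp] lemma innerQ_qmk (s t : P.SS) (x y : K) :
    P.innerQ (P.qmk s x) (P.qmk t y) = ⟪P.w t x, P.w s y⟫ := rfl

def core : InnerProductSpace.Core ℂ P.Q where
  inner := P.innerQ
  conj_inner_symm := by
    refine P.ind fun s x => P.ind fun t y => ?_
    show (starRingEnd ℂ) (P.innerQ (P.qmk t y) (P.qmk s x)) = P.innerQ (P.qmk s x) (P.qmk t y)
    rw [innerQ_qmk, innerQ_qmk, inner_conj_symm]
  re_inner_nonneg := by
    refine P.ind fun s x => ?_
    show 0 ≤ RCLike.re (P.innerQ (P.qmk s x) (P.qmk s x))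
    rw [innerQ_qmk]
    exact inner_self_nonneg
  definite := by
    refine P.ind fun s x => ?_
    intro h
    have h' : ⟪P.w s x, P.w s x⟫ = 0 := h
    have hx : P.w s x = 0 := inner_self_eq_zero.mp h'
    have hx0 : x = 0 := P.w_inj s (by rw [hx, map_zero])
    rw [hx0, zero_def]
    exact P.sound (by rw [map_zero, map_zero])
  add_left := by
    refine P.ind fun s x => P.ind fun t y => P.ind fun u z => ?_
    show P.innerQ (P.qmk s x + P.qmk t y) (P.qmk u z)
      = P.innerQ (P.qmk s x) (P.qmk u z) + P.innerQ (P.qmk t y) (P.qmk u z)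
    rw [qmk_add, innerQ_qmk, innerQ_qmk, innerQ_qmk, map_add, inner_add_left]
    congr 1
    · calc ⟪P.w u (P.w t x), P.w (s + t) z⟫
          = ⟪P.w (u + t) x, P.w (s + t) z⟫ := by rw [P.w_w]
        _ = ⟪P.w (t + u) x, P.w (t + s) z⟫ := by
            rw [P.w_index (add_comm u t) x, P.w_index (add_comm s t) z]
        _ = ⟪P.w t (P.w u x), P.w t (P.w s z)⟫ := by rw [P.w_w, P.w_w]
        _ = ⟪P.w u x, P.w s z⟫ := P.w_inner _ _ _
    · calc ⟪P.w u (P.w s y), P.w (s + t) z⟫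
          = ⟪P.w (u + s) y, P.w (s + t) z⟫ := by rw [P.w_w]
        _ = ⟪P.w (s + u) y, P.w (s + t) z⟫ := by rw [P.w_index (add_comm u s) y]
        _ = ⟪P.w s (P.w u y), P.w s (P.w t z)⟫ := by rw [P.w_w, P.w_w]
        _ = ⟪P.w u y, P.w t z⟫ := P.w_inner _ _ _
  smul_left := by
    refine P.ind fun s x => P.ind fun t y => ?_
    intro c
    show P.innerQ (c • P.qmk s x) (P.qmk t y)
      = (starRingEnd ℂ) c * P.innerQ (P.qmk s x) (P.qmk t y)
    rw [qmk_smul, innerQ_qmk, innerQ_qmk, map_smul, inner_smul_left]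

instance : NormedAddCommGroup P.Q := P.core.toNormedAddCommGroup

instance : InnerProductSpace ℂ P.Q := InnerProductSpace.ofCore P.core.toCore

@[simp] lemma inner_qmk (s t : P.SS) (x y : K) :
    ⟪P.qmk s x, P.qmk t y⟫ = ⟪P.w t x, P.w s y⟫ := rfl

/-- The canonical embedding `K → Q` as a linear isometry. -/
def jK : K →ₗᵢ[ℂ] P.Q :=
  LinearMap.isometryOfInner
    { toFun := fun x => P.qmk 0 x
      map_add' := fun x y => by
        rw [qmk_add]
        refine (qmk_index P (add_zero (0 : P.SS)) _).symm.trans ?_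
        refine congrArg (P.qmk _) ?_
        rw [P.w_zero, P.w_zero]
      map_smul' := fun c x => by
        simp only [RingHom.id_apply]
        rw [qmk_smul] }
    (fun x y => by
      show ⟪P.qmk 0 x, P.qmk 0 y⟫ = ⟪x, y⟫
      rw [inner_qmk, P.w_zero, P.w_zero])

@[simp] lemma jK_apply (x : K) : P.jK x = P.qmk 0 x := rfl

/-- The shift `mk a x ↦ mk a (w s x)` as a bare function on `Q`. -/
def uF (s : P.SS) : P.Q → P.Q :=
  Quotient.map (fun p => (p.1, P.w s p.2)) (by
    rintro ⟨a, x⟩ ⟨b, y⟩ h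
    show P.w b (P.w s x) = P.w a (P.w s y)
    rw [P.w_comm b s, P.w_comm a s, show P.w b x = P.w a y from h])

@[simp] lemma uF_qmk (s a : P.SS) (x : K) : P.uF s (P.qmk a x) = P.qmk a (P.w s x) := rfl

/-- The shift `mk a x ↦ mk a (w s x)` as a linear map on `Q`. -/
def uL (s : P.SS) : P.Q →ₗ[ℂ] P.Q where
  toFun := P.uF s
  map_add' := by
    refine P.ind fun a x => P.ind fun b y => ?_
    rw [qmk_add, uF_qmk, uF_qmk, uF_qmk, qmk_add]
    refine congrArg (P.qmk _) ?_
    rw [map_add, P.w_comm s b, P.w_comm s a]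
  map_smul' := by
    intro c
    refine P.ind fun a x => ?_
    simp only [RingHom.id_apply]
    rw [qmk_smul, uF_qmk, uF_qmk, qmk_smul, map_smul]

@[simp] lemma uL_qmk (s a : P.SS) (x : K) : P.uL s (P.qmk a x) = P.qmk a (P.w s x) := rfl

/-- The backward shift `mk a x ↦ mk (a + s) x` as a bare function on `Q`. -/
def vF (s : P.SS) : P.Q → P.Q :=
  Quotient.map (fun p => ((p.1 + s : P.SS), p.2)) (by
    rintro ⟨a, x⟩ ⟨b, y⟩ h
    have h' : P.w b x = P.w a y := h
    show P.w (b + s) x = P.w (a + s) y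
    calc P.w (b + s) x = P.w (s + b) x := P.w_index (add_comm b s) x
      _ = P.w (s + a) y := P.w_cancel h' s
      _ = P.w (a + s) y := P.w_index (add_comm s a) y)

@[simp] lemma vF_qmk (s a : P.SS) (x : K) : P.vF s (P.qmk a x) = P.qmk (a + s) x := rfl

/-- The backward shift as a linear map on `Q`. -/
def vL (s : P.SS) : P.Q →ₗ[ℂ] P.Q where
  toFun := P.vF s
  map_add' := by
    refine P.ind fun a x => P.ind fun b y => ?_
    rw [qmk_add, vF_qmk, vF_qmk, vF_qmk, qmk_add]
    apply P.sound
    rw [map_add, map_add, P.w_w, P.w_w, P.w_w, P.w_w]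
    rw [P.w_index (show a + s + (b + s) + b = a + b + s + (b + s) by abel) x,
      P.w_index (show a + s + (b + s) + a = a + b + s + (a + s) by abel) y]
  map_smul' := by
    intro c
    refine P.ind fun a x => ?_
    simp only [RingHom.id_apply]
    rw [qmk_smul, vF_qmk, vF_qmk, qmk_smul]

@[simp] lemma vL_qmk (s a : P.SS) (x : K) : P.vL s (P.qmk a x) = P.qmk (a + s) x := rfl

lemma uL_inner (s : P.SS) (q r : P.Q) : ⟪P.uL s q, P.uL s r⟫ = ⟪q, r⟫ := by
  induction q using Quotient.inductionOn with
  | h p =>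
    induction r using Quotient.inductionOn with
    | h p' =>
      obtain ⟨a, x⟩ := p
      obtain ⟨b, y⟩ := p'
      show ⟪P.uL s (P.qmk a x), P.uL s (P.qmk b y)⟫ = ⟪P.qmk a x, P.qmk b y⟫
      rw [uL_qmk, uL_qmk, inner_qmk, inner_qmk, P.w_comm b s, P.w_comm a s, P.w_inner]

def uIso (s : P.SS) : P.Q →ₗᵢ[ℂ] P.Q :=
  (P.uL s).isometryOfInner (P.uL_inner s)

def uC (s : P.SS) : P.Q →L[ℂ] P.Q := (P.uIso s).toContinuousLinearMap

@[simp] lemma uC_qmk (s a : P.SS) (x : K) : P.uC s (P.qmk a x) = P.qmk a (P.w s x) := rfl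

lemma vL_inner (s : P.SS) (q r : P.Q) : ⟪P.vL s q, P.vL s r⟫ = ⟪q, r⟫ := by
  induction q using Quotient.inductionOn with
  | h p =>
    induction r using Quotient.inductionOn with
    | h p' =>
      obtain ⟨a, x⟩ := p
      obtain ⟨b, y⟩ := p'
      show ⟪P.vL s (P.qmk a x), P.vL s (P.qmk b y)⟫ = ⟪P.qmk a x, P.qmk b y⟫
      rw [vL_qmk, vL_qmk, inner_qmk, inner_qmk]
      calc ⟪P.w (b + s) x, P.w (a + s) y⟫
          = ⟪P.w (s + b) x, P.w (s + a) y⟫ := by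
            rw [P.w_index (add_comm b s) x, P.w_index (add_comm a s) y]
        _ = ⟪P.w s (P.w b x), P.w s (P.w a y)⟫ := by rw [P.w_w, P.w_w]
        _ = ⟪P.w b x, P.w a y⟫ := P.w_inner _ _ _

def vIso (s : P.SS) : P.Q →ₗᵢ[ℂ] P.Q :=
  (P.vL s).isometryOfInner (P.vL_inner s)

def vC (s : P.SS) : P.Q →L[ℂ] P.Q := (P.vIso s).toContinuousLinearMap

@[simp] lemma vC_qmk (s a : P.SS) (x : K) : P.vC s (P.qmk a x) = P.qmk (a + s) x := rfl

lemma uC_vC (s : P.SS) (q : P.Q) : P.uC s (P.vC s q) = q := by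
  induction q using Quotient.inductionOn with
  | h p =>
    obtain ⟨a, x⟩ := p
    show P.uC s (P.vC s (P.qmk a x)) = P.qmk a x
    rw [vC_qmk, uC_qmk]
    exact P.sound (by rw [P.w_w])

lemma vC_uC (s : P.SS) (q : P.Q) : P.vC s (P.uC s q) = q := by
  induction q using Quotient.inductionOn with
  | h p =>
    obtain ⟨a, x⟩ := p
    show P.vC s (P.uC s (P.qmk a x)) = P.qmk a x
    rw [uC_qmk, vC_qmk]
    exact P.sound (by rw [P.w_w])

lemma uC_add (a b : P.SS) : P.uC (a + b) = P.uC a ∘L P.uC b := by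
  refine ContinuousLinearMap.ext ?_
  refine P.ind fun s x => ?_
  show P.uC (a + b) (P.qmk s x) = P.uC a (P.uC b (P.qmk s x))
  rw [uC_qmk, uC_qmk, uC_qmk, P.w_w]

lemma uC_zero : P.uC 0 = 1 := by
  refine ContinuousLinearMap.ext ?_
  refine P.ind fun s x => ?_
  show P.uC 0 (P.qmk s x) = P.qmk s x
  rw [uC_qmk, P.w_zero]

lemma vC_inner_uC (s : P.SS) (q r : P.Q) : ⟪P.vC s q, r⟫ = ⟪q, P.uC s r⟫ := by
  conv_lhs => rw [← P.uL_inner s (P.vC s q) r]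
  congr 1
  exact P.uC_vC s q

/-! ### The completion and the extended operators -/

/-- Extension of an operator on `Q` to the completion. -/
def extC (A : P.Q →L[ℂ] P.Q) : Completion P.Q →L[ℂ] Completion P.Q :=
  ((Completion.toComplL : P.Q →L[ℂ] Completion P.Q).comp A).extend Completion.toComplL

@[simp] lemma extC_coe (A : P.Q →L[ℂ] P.Q) (q : P.Q) :
    P.extC A (q : Completion P.Q) = ((A q : P.Q) : Completion P.Q) :=
  ContinuousLinearMap.extend_eq _ Completion.denseRange_coe
    (Completion.isUniformInducing_coe P.Q) q

lemma extC_comp (A B : P.Q →L[ℂ] P.Q) : P.extC (A ∘L B) = P.extC A ∘L P.extC B := by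
  refine ContinuousLinearMap.extend_unique _ Completion.denseRange_coe
    (Completion.isUniformInducing_coe P.Q) _ ?_
  refine ContinuousLinearMap.ext fun q => ?_
  show P.extC A (P.extC B (q : Completion P.Q)) = ((A (B q) : P.Q) : Completion P.Q)
  rw [extC_coe, extC_coe]

lemma extC_one : P.extC 1 = 1 := by
  refine ContinuousLinearMap.extend_unique _ Completion.denseRange_coe
    (Completion.isUniformInducing_coe P.Q) _ ?_
  refine ContinuousLinearMap.ext fun q => ?_
  rfl

lemma extC_adjoint (s : P.SS) : adjoint (P.extC (P.uC s)) = P.extC (P.vC s) := by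
  symm
  rw [ContinuousLinearMap.eq_adjoint_iff]
  intro x y
  refine Completion.induction_on₂ x y ?_ ?_
  · apply isClosed_eq
    · exact Completion.Continuous.inner ((P.extC (P.vC s)).continuous.comp continuous_fst)
        continuous_snd
    · exact Completion.Continuous.inner continuous_fst
        ((P.extC (P.uC s)).continuous.comp continuous_snd)
  · intro q r
    rw [extC_coe, extC_coe, Completion.inner_coe, Completion.inner_coe]
    exact P.vC_inner_uC s q r

lemma extC_unitary_left (s : P.SS) :
    P.extC (P.uC s) ∘L adjoint (P.extC (P.uC s)) = 1 := by
  rw [extC_adjoint, ← extC_comp]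
  have : P.uC s ∘L P.vC s = 1 := ContinuousLinearMap.ext (P.uC_vC s)
  rw [this, extC_one]

lemma extC_unitary_right (s : P.SS) :
    adjoint (P.extC (P.uC s)) ∘L P.extC (P.uC s) = 1 := by
  rw [extC_adjoint, ← extC_comp]
  have : P.vC s ∘L P.uC s = 1 := ContinuousLinearMap.ext (P.vC_uC s)
  rw [this, extC_one]

end RUDData

end RegUnitDilAux

section MainTheorem

local notation "⟪" x ", " y "⟫" => @inner ℂ _ _ x y

open UniformSpace

/-- If a semigroup of contractions `T` over a `+,-`-closed unital subsemigroup
`Sig ⊆ ℝ₊^Ω` has a regular isometric dilation, then it has a regular unitary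
dilation. -/
theorem regular_isometric_dilation_implies_regular_unitary_dilation
    {Ω : Type} {H : Type} [NormedAddCommGroup H] [InnerProductSpace ℂ H]
    [CompleteSpace H]
    (Sig : Set (Ω → ℝ))
    (hnn : ∀ s ∈ Sig, ∀ j : Ω, 0 ≤ s j)
    (h0 : (0 : Ω → ℝ) ∈ Sig)
    (hadd : ∀ a ∈ Sig, ∀ b ∈ Sig, a + b ∈ Sig)
    (hpm : ∀ a ∈ Sig, ∀ b ∈ Sig, posPart' (a - b) ∈ Sig ∧ negPart' (a - b) ∈ Sig)
    -- `T` is a semigroup of contractions on `H` over `Sig`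
    (T : (Ω → ℝ) → H →L[ℂ] H)
    (hT0 : T 0 = 1)
    (hTsg : ∀ a ∈ Sig, ∀ b ∈ Sig, T (a + b) = T a ∘L T b)
    (hTcontr : ∀ s ∈ Sig, ‖T s‖ ≤ 1)
    -- `T` has a regular isometric dilation
    (hisodil : ∃ (K : Type) (_ : NormedAddCommGroup K) (_ : InnerProductSpace ℂ K)
      (_ : CompleteSpace K) (ι : H →L[ℂ] K) (W : (Ω → ℝ) → K →L[ℂ] K),
      (∀ h : H, ‖ι h‖ = ‖h‖) ∧
      W 0 = 1 ∧
      (∀ a ∈ Sig, ∀ b ∈ Sig, W (a + b) = W a ∘L W b) ∧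
      (∀ s ∈ Sig, ∀ x : K, ‖W s x‖ = ‖x‖) ∧
      (∀ a ∈ Sig, ∀ b ∈ Sig,
        adjoint ι ∘L (adjoint (W (negPart' (a - b))) ∘L W (posPart' (a - b))) ∘L ι
          = adjoint (T (negPart' (a - b))) ∘L T (posPart' (a - b)))) :
    -- then `T` has a regular unitary dilation
    ∃ (K : Type) (_ : NormedAddCommGroup K) (_ : InnerProductSpace ℂ K)
      (_ : CompleteSpace K) (ι : H →L[ℂ] K) (U : (Ω → ℝ) → K →L[ℂ] K),
      (∀ h : H, ‖ι h‖ = ‖h‖) ∧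
      U 0 = 1 ∧
      (∀ a ∈ Sig, ∀ b ∈ Sig, U (a + b) = U a ∘L U b) ∧
      (∀ s ∈ Sig, U s ∘L adjoint (U s) = 1 ∧ adjoint (U s) ∘L U s = 1) ∧
      (∀ a ∈ Sig, ∀ b ∈ Sig,
        adjoint ι ∘L (adjoint (U (negPart' (a - b))) ∘L U (posPart' (a - b))) ∘L ι
          = adjoint (T (negPart' (a - b))) ∘L T (posPart' (a - b))) := by
  classical
  obtain ⟨K, _, _, _, ι, W, hι, hW0, hWsg, hWiso, hreg⟩ := hisodil
  set P : RUDData Ω K := ⟨Sig, h0, hadd, W, hW0, hWsg, hWiso⟩ with hP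
  -- the new Hilbert space
  refine ⟨Completion P.Q, inferInstance, inferInstance, inferInstance,
    (Completion.toComplL : P.Q →L[ℂ] Completion P.Q) ∘L (P.jK.toContinuousLinearMap ∘L ι),
    fun s => if h : s ∈ Sig then P.extC (P.uC ⟨s, h⟩) else 1,
    ?_, ?_, ?_, ?_, ?_⟩
  · intro h
    calc ‖((Completion.toComplL : P.Q →L[ℂ] Completion P.Q) ∘L
          (P.jK.toContinuousLinearMap ∘L ι)) h‖
        = ‖((P.jK (ι h) : P.Q) : Completion P.Q)‖ := rfl
      _ = ‖P.jK (ι h)‖ := Completion.norm_coe _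
      _ = ‖ι h‖ := P.jK.norm_map _
      _ = ‖h‖ := hι h
  · simp only [dif_pos h0]
    have h00 : P.uC ⟨(0 : Ω → ℝ), h0⟩ = P.uC 0 := rfl
    rw [h00, P.uC_zero, P.extC_one]
  · intro a ha b hb
    simp only [dif_pos ha, dif_pos hb, dif_pos (hadd a ha b hb)]
    have hab : P.uC ⟨a + b, hadd a ha b hb⟩ = P.uC (@HAdd.hAdd P.SS P.SS P.SS _ ⟨a, ha⟩ ⟨b, hb⟩) := rfl
    rw [hab]
    exact (congrArg P.extC (P.uC_add _ _)).trans (P.extC_comp _ _)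
  · intro s hs
    simp only [dif_pos hs]
    exact ⟨P.extC_unitary_left _, P.extC_unitary_right _⟩
  · intro a ha b hb
    obtain ⟨hp, hn⟩ := hpm a ha b hb
    simp only [dif_pos hp, dif_pos hn]
    refine ContinuousLinearMap.ext fun h => ?_
    refine ext_inner_right ℂ fun h' => ?_
    simp only [ContinuousLinearMap.comp_apply, ContinuousLinearMap.adjoint_inner_left]
    have key : ∀ (m : P.SS) (z : K),
        P.extC (P.uC m) ((Completion.toComplL : P.Q →L[ℂ] Completion P.Q)
          (P.jK.toContinuousLinearMap z))
          = ((P.qmk 0 (P.w m z) : P.Q) : Completion P.Q) := by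
      intro m z
      show P.extC (P.uC m) ((P.qmk 0 z : P.Q) : Completion P.Q) = _
      rw [P.extC_coe]
      rfl
    rw [key ⟨posPart' (a - b), hp⟩ (ι h), key ⟨negPart' (a - b), hn⟩ (ι h'),
      Completion.inner_coe, P.inner_qmk, P.w_zero, P.w_zero]
    have hr' : ∀ x y : H, ⟪W (posPart' (a - b)) (ι x), W (negPart' (a - b)) (ι y)⟫
        = ⟪T (posPart' (a - b)) x, T (negPart' (a - b)) y⟫ := by
      intro x y
      have h1 : ⟪(adjoint ι ∘L (adjoint (W (negPart' (a - b)))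
            ∘L W (posPart' (a - b))) ∘L ι) x, y⟫
          = ⟪(adjoint (T (negPart' (a - b))) ∘L T (posPart' (a - b))) x, y⟫ := by
        rw [hreg a ha b hb]
      simpa only [ContinuousLinearMap.comp_apply, ContinuousLinearMap.adjoint_inner_left]
        using h1
    exact hr' h h'

end MainTheorem
end

section
/- Let Ω be a set and let Σ be a subsemigroup of ℝ₊^Ω containing 0 which is +,−-closed, and let T = {T_s}_{s∈Σ} be a semigroup of contractions on a complex Hilbert space H. Suppose U = {U_s}_{s∈Σ} is a regular unitary dilation of T acting on a Hilbert space L ⊇ H which is minimal, i.e., L is the closed linear span of {U_{s₋}* U_{s₊} h : s ∈ Σ − Σ, h ∈ H}. Let K be the closed linear span of {U_s h : s ∈ Σ, h ∈ H} and set V_s := U_s|_K for s ∈ Σ. Then each V_s is an isometry of K into K, V = {V_s}_{s∈Σ} is a semigroup (V_0 = I, V_s V_t = V_{s+t}), and V is a regular isometric dilation of T. -/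
open ContinuousLinearMap

/-- The closed subspace `K = ⋁_{s ∈ Sig} U_s H` of the dilation space `L`. -/
noncomputable def dilSpan {Ω H L : Type} [NormedAddCommGroup H] [InnerProductSpace ℂ H]
    [NormedAddCommGroup L] [InnerProductSpace ℂ L]
    (Sig : Set (Ω → ℝ)) (ι : H →L[ℂ] L) (U : (Ω → ℝ) → L →L[ℂ] L) : Submodule ℂ L :=
  (Submodule.span ℂ {x : L | ∃ s ∈ Sig, ∃ h : H, x = U s (ι h)}).topologicalClosure

/-- **From a minimal regular unitary dilation to a regular isometric dilation.**
If `U` on `L ⊇ H` is a minimal regular unitary dilation of a semigroup of contractions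
`T` over a `+,-`-closed subsemigroup `Sig ⊆ ℝ₊^Ω`, then, with
`K := ⋁_{s ∈ Sig} U_s H` and `V_s := U_s|_K`, each `V_s` is an isometry of `K` into
`K`, `V` is a semigroup, and `V` is a regular isometric dilation of `T`. -/
theorem restriction_of_minimal_regular_unitary_dilation_is_regular_isometric_dilation
    {Ω : Type} {H : Type} [NormedAddCommGroup H] [InnerProductSpace ℂ H]
    [CompleteSpace H]
    {L : Type} [NormedAddCommGroup L] [InnerProductSpace ℂ L] [CompleteSpace L]
    (Sig : Set (Ω → ℝ))
    (hnn : ∀ s ∈ Sig, ∀ j : Ω, 0 ≤ s j)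
    (h0 : (0 : Ω → ℝ) ∈ Sig)
    (hadd : ∀ a ∈ Sig, ∀ b ∈ Sig, a + b ∈ Sig)
    (hpm : ∀ a ∈ Sig, ∀ b ∈ Sig, posPart' (a - b) ∈ Sig ∧ negPart' (a - b) ∈ Sig)
    -- `T` is a semigroup of contractions on `H` over `Sig`
    (T : (Ω → ℝ) → H →L[ℂ] H)
    (hT0 : T 0 = 1)
    (hTsg : ∀ a ∈ Sig, ∀ b ∈ Sig, T (a + b) = T a ∘L T b)
    (hTcontr : ∀ s ∈ Sig, ‖T s‖ ≤ 1)
    -- `U` is a minimal regular unitary dilation of `T` on `L ⊇ H`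
    (ι : H →L[ℂ] L) (hι : ∀ h : H, ‖ι h‖ = ‖h‖)
    (U : (Ω → ℝ) → L →L[ℂ] L)
    (hU0 : U 0 = 1)
    (hUsg : ∀ a ∈ Sig, ∀ b ∈ Sig, U (a + b) = U a ∘L U b)
    (hUun : ∀ s ∈ Sig, U s ∘L adjoint (U s) = 1 ∧ adjoint (U s) ∘L U s = 1)
    (hreg : ∀ a ∈ Sig, ∀ b ∈ Sig,
      adjoint ι ∘L (adjoint (U (negPart' (a - b))) ∘L U (posPart' (a - b))) ∘L ι
        = adjoint (T (negPart' (a - b))) ∘L T (posPart' (a - b)))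
    (hmin : (Submodule.span ℂ {x : L | ∃ a ∈ Sig, ∃ b ∈ Sig, ∃ h : H,
        x = adjoint (U (negPart' (a - b)))
              (U (posPart' (a - b)) (ι h))}).topologicalClosure = ⊤) :
    -- `H` sits inside `K := ⋁_{s ∈ Sig} U_s H`
    (∀ h : H, ι h ∈ dilSpan Sig ι U) ∧
    -- `K` is invariant under each `U_s`, `s ∈ Sig`
    (∀ s ∈ Sig, ∀ x ∈ dilSpan Sig ι U, U s x ∈ dilSpan Sig ι U) ∧
    -- the restrictions `V_s := U_s|_K` form a regular isometric dilation of `T`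
    ∃ (V : (Ω → ℝ) → (dilSpan Sig ι U →L[ℂ] dilSpan Sig ι U))
      (ι' : H →L[ℂ] dilSpan Sig ι U),
      -- `ι'` is the embedding of `H` into `K` induced by `ι`
      (∀ h : H, (ι' h : L) = ι h) ∧
      -- `V_s` is the restriction of `U_s` to `K`
      (∀ s ∈ Sig, ∀ x : dilSpan Sig ι U, (V s x : L) = U s x) ∧
      -- `V` is a semigroup of isometries
      V 0 = 1 ∧
      (∀ a ∈ Sig, ∀ b ∈ Sig, V (a + b) = V a ∘L V b) ∧
      (∀ s ∈ Sig, ∀ x : dilSpan Sig ι U, ‖V s x‖ = ‖x‖) ∧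
      -- `V` is a regular dilation of `T`:
      -- `⟨V_{s₊} h, V_{s₋} g⟩ = ⟨T_{s₊} h, T_{s₋} g⟩`, i.e. `P_H V_{s₋}* V_{s₊}|_H = T_{s₋}* T_{s₊}`
      (∀ a ∈ Sig, ∀ b ∈ Sig, ∀ g h : H,
        (inner ℂ (V (posPart' (a - b)) (ι' h)) (V (negPart' (a - b)) (ι' g)) : ℂ)
          = (inner ℂ (T (posPart' (a - b)) h) (T (negPart' (a - b)) g) : ℂ)) := by
  classical
  set S : Set L := {x : L | ∃ s ∈ Sig, ∃ h : H, x = U s (ι h)} with hS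
  -- inner product preservation by U s
  have hUinner : ∀ s ∈ Sig, ∀ x y : L, (inner ℂ (U s x) (U s y) : ℂ) = inner ℂ x y := by
    intro s hs x y
    have h1 : adjoint (U s) (U s y) = y := by
      have := congrArg (fun A : L →L[ℂ] L => A y) (hUun s hs).2
      simpa using this
    rw [← ContinuousLinearMap.adjoint_inner_right (U s) x (U s y), h1]
  have hUnorm : ∀ s ∈ Sig, ∀ x : L, ‖U s x‖ = ‖x‖ := by
    intro s hs x
    rw [@norm_eq_sqrt_re_inner ℂ, @norm_eq_sqrt_re_inner ℂ, hUinner s hs x x]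
  -- H sits inside K
  have hmemH : ∀ h : H, ι h ∈ dilSpan Sig ι U := by
    intro h
    apply Submodule.le_topologicalClosure
    apply Submodule.subset_span
    exact ⟨0, h0, h, by simp [hU0]⟩
  -- invariance
  have hinv : ∀ s ∈ Sig, ∀ x ∈ dilSpan Sig ι U, U s x ∈ dilSpan Sig ι U := by
    intro s hs x hx
    have hmapS : Submodule.map (U s : L →ₗ[ℂ] L) (Submodule.span ℂ S) ≤ Submodule.span ℂ S := by
      rw [Submodule.map_span]
      apply Submodule.span_mono
      rintro _ ⟨_, ⟨t, ht, h, rfl⟩, rfl⟩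
      exact ⟨s + t, hadd s hs t ht, h, by simp [hUsg s hs t ht]⟩
    have hx' : x ∈ closure (Submodule.span ℂ S : Set L) := hx
    have : U s x ∈ closure (Submodule.span ℂ S : Set L) :=
      map_mem_closure (U s).continuous hx'
        (fun y hy => hmapS ⟨y, hy, rfl⟩)
    exact this
  refine ⟨hmemH, hinv, ?_⟩
  -- define V
  set K := dilSpan Sig ι U with hK
  let V : (Ω → ℝ) → (K →L[ℂ] K) := fun s =>
    if hs : s ∈ Sig then
      ContinuousLinearMap.codRestrict ((U s).comp K.subtypeL) K
        (fun x => hinv s hs x x.2)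
    else 1
  have hVcoe : ∀ s ∈ Sig, ∀ x : K, (V s x : L) = U s x := by
    intro s hs x
    simp only [V, dif_pos hs]
    rfl
  refine ⟨V, ContinuousLinearMap.codRestrict ι K hmemH, fun h => rfl, hVcoe, ?_, ?_, ?_, ?_⟩
  · -- V 0 = 1
    ext x
    have h1 := hVcoe 0 h0 x
    rw [hU0, ContinuousLinearMap.one_apply] at h1
    simpa using Subtype.ext h1
  · -- semigroup
    intro a ha b hb
    ext x
    rw [ContinuousLinearMap.comp_apply, hVcoe _ (hadd a ha b hb) x, hVcoe a ha,
      hVcoe b hb, hUsg a ha b hb]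
    rfl
  · -- isometry
    intro s hs x
    have : ‖(V s x : L)‖ = ‖(x : L)‖ := by rw [hVcoe s hs x]; exact hUnorm s hs x
    simpa using this
  · -- regularity
    intro a ha b hb g h
    obtain ⟨hp, hn⟩ := hpm a ha b hb
    have hcoe : (inner ℂ (V (posPart' (a - b)) (ContinuousLinearMap.codRestrict ι K hmemH h))
        (V (negPart' (a - b)) (ContinuousLinearMap.codRestrict ι K hmemH g)) : ℂ)
        = inner ℂ (U (posPart' (a - b)) (ι h)) (U (negPart' (a - b)) (ι g)) := by
      rw [Submodule.coe_inner, hVcoe _ hp, hVcoe _ hn]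
      rfl
    rw [hcoe]
    have key := congrArg (fun A : H →L[ℂ] H => A h) (hreg a ha b hb)
    simp only [ContinuousLinearMap.comp_apply] at key
    calc (inner ℂ (U (posPart' (a - b)) (ι h)) (U (negPart' (a - b)) (ι g)) : ℂ)
        = inner ℂ ((adjoint (U (negPart' (a - b)))) (U (posPart' (a - b)) (ι h))) (ι g) := by
          rw [ContinuousLinearMap.adjoint_inner_left (U (negPart' (a - b)))]
      _ = inner ℂ (adjoint ι ((adjoint (U (negPart' (a - b)))) (U (posPart' (a - b)) (ι h)))) g := by
          rw [ContinuousLinearMap.adjoint_inner_left ι]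
      _ = inner ℂ (adjoint (T (negPart' (a - b))) (T (posPart' (a - b)) h)) g := by rw [key]
      _ = inner ℂ (T (posPart' (a - b)) h) (T (negPart' (a - b)) g) := by
          rw [ContinuousLinearMap.adjoint_inner_left]
end

section
/- Let Ω be a set, for each i ∈ Ω let S_i be a commensurable unital subsemigroup of ℝ₊, and let S be the semigroup of all finitely supported functions s : Ω → ℝ₊ with s(j) ∈ S_j for all j. Let T = {T_s}_{s∈S} be a semigroup of contractions on a complex Hilbert space H. If T has a regular unitary dilation, then for every finite subset v ⊆ Ω and every s ∈ S, the operator ∑_{u⊆v} (−1)^{|u|} T_{s[u]}* T_{s[u]} is positive semidefinite. -/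
open ContinuousLinearMap

/-- A subset of `ℝ` is a commensurable unital subsemigroup of `ℝ₊` if it contains `0`,
is closed under addition, consists of nonnegative reals, and any finitely many of its
elements are natural multiples of a common element. -/
def IsCommensurableSubsemigroup (A : Set ℝ) : Prop :=
  0 ∈ A ∧ (∀ x ∈ A, ∀ y ∈ A, x + y ∈ A) ∧ (∀ x ∈ A, 0 ≤ x) ∧
    ∀ (N : ℕ) (f : Fin N → ℝ), (∀ k, f k ∈ A) →
      ∃ s₀ ∈ A, ∃ a : Fin N → ℕ, ∀ k, f k = (a k : ℝ) * s₀

/-- The semigroup `S = Σᵢ Sᵢ` of finitely supported functions `s : Ω → ℝ` with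
`s j ∈ S j` for every `j`. -/
def SumSemigroup {Ω : Type*} (S : Ω → Set ℝ) : Set (Ω → ℝ) :=
  {s | (Function.support s).Finite ∧ ∀ j, s j ∈ S j}

/-- `s[u]`: the function agreeing with `s` on the finite set `u` and vanishing off `u`. -/
def restrFun {Ω : Type*} [DecidableEq Ω] (s : Ω → ℝ) (u : Finset Ω) : Ω → ℝ :=
  fun j => if j ∈ u then s j else 0

local notation "⟪" x ", " y "⟫" => @inner ℂ _ _ x y

lemma alt_sum_union {Ω : Type} [DecidableEq Ω] (v : Finset Ω) (g : Finset Ω → ℂ) :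
    ∑ u ∈ v.powerset, ∑ w ∈ v.powerset,
      ((-1 : ℂ) ^ (u.card + w.card)) * g (u ∪ w)
      = ∑ r ∈ v.powerset, ((-1 : ℂ) ^ r.card) * g r := by
  induction v using Finset.induction_on generalizing g with
  | empty => simp
  | insert a v ha ih =>
    have hcard : ∀ u ∈ v.powerset, (insert a u).card = u.card + 1 := by
      intro u hu
      exact Finset.card_insert_of_notMem (fun h => ha (Finset.mem_powerset.mp hu h))
    have h1 : ∀ F : Finset Ω → ℂ, ∑ u ∈ (insert a v).powerset, F u
        = ∑ u ∈ v.powerset, F u + ∑ u ∈ v.powerset, F (insert a u) :=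
      fun F => Finset.sum_powerset_insert ha F
    simp only [h1]
    rw [Finset.sum_add_distrib, Finset.sum_add_distrib]
    have e1 : ∑ u ∈ v.powerset, ∑ w ∈ v.powerset,
        ((-1:ℂ) ^ (u.card + (insert a w).card)) * g (u ∪ insert a w)
        = - ∑ u ∈ v.powerset, ∑ w ∈ v.powerset,
            ((-1:ℂ) ^ (u.card + w.card)) * g (insert a (u ∪ w)) := by
      rw [← Finset.sum_neg_distrib]
      refine Finset.sum_congr rfl fun u hu => ?_
      rw [← Finset.sum_neg_distrib]
      refine Finset.sum_congr rfl fun w hw => ?_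
      rw [hcard w hw, Finset.union_insert]
      ring
    have e2 : ∑ u ∈ v.powerset, ∑ w ∈ v.powerset,
        ((-1:ℂ) ^ ((insert a u).card + w.card)) * g (insert a u ∪ w)
        = - ∑ u ∈ v.powerset, ∑ w ∈ v.powerset,
            ((-1:ℂ) ^ (u.card + w.card)) * g (insert a (u ∪ w)) := by
      rw [← Finset.sum_neg_distrib]
      refine Finset.sum_congr rfl fun u hu => ?_
      rw [← Finset.sum_neg_distrib]
      refine Finset.sum_congr rfl fun w hw => ?_
      rw [hcard u hu, Finset.insert_union]
      ring
    have e3 : ∑ u ∈ v.powerset, ∑ w ∈ v.powerset,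
        ((-1:ℂ) ^ ((insert a u).card + (insert a w).card)) * g (insert a u ∪ insert a w)
        = ∑ u ∈ v.powerset, ∑ w ∈ v.powerset,
            ((-1:ℂ) ^ (u.card + w.card)) * g (insert a (u ∪ w)) := by
      refine Finset.sum_congr rfl fun u hu => Finset.sum_congr rfl fun w hw => ?_
      rw [hcard u hu, hcard w hw, Finset.insert_union, Finset.union_insert,
        Finset.insert_idem]
      ring
    rw [e1, e2, e3, ih g, ih (fun r => g (insert a r))]
    have e4 : ∑ r ∈ v.powerset, ((-1:ℂ) ^ (insert a r).card) * g (insert a r)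
        = - ∑ r ∈ v.powerset, ((-1:ℂ) ^ r.card) * g (insert a r) := by
      rw [← Finset.sum_neg_distrib]
      refine Finset.sum_congr rfl fun r hr => ?_
      rw [hcard r hr]; ring
    rw [e4]
    ring

/-- **Necessity of the regularity condition.**  If a semigroup of contractions over
`S = Σᵢ Sᵢ` (`Sᵢ` commensurable unital subsemigroups of `ℝ₊`) has a regular unitary
dilation, then for every finite `v ⊆ Ω` and every `s ∈ S`,
`∑_{u ⊆ v} (-1)^{|u|} T_{s[u]}* T_{s[u]} ≥ 0`. -/
theorem regular_unitary_dilation_implies_positivity_condition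
    {Ω : Type} [DecidableEq Ω] {H : Type} [NormedAddCommGroup H]
    [InnerProductSpace ℂ H] [CompleteSpace H]
    (S : Ω → Set ℝ) (hS : ∀ i, IsCommensurableSubsemigroup (S i))
    -- `T` is a semigroup of contractions on `H` over `SumSemigroup S`
    (T : (Ω → ℝ) → H →L[ℂ] H)
    (hT0 : T 0 = 1)
    (hTsg : ∀ a ∈ SumSemigroup S, ∀ b ∈ SumSemigroup S, T (a + b) = T a ∘L T b)
    (hTcontr : ∀ s ∈ SumSemigroup S, ‖T s‖ ≤ 1)
    -- `T` has a regular unitary dilation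
    (hdil : ∃ (K : Type) (_ : NormedAddCommGroup K) (_ : InnerProductSpace ℂ K)
      (_ : CompleteSpace K) (ι : H →L[ℂ] K) (U : (Ω → ℝ) → K →L[ℂ] K),
      (∀ h : H, ‖ι h‖ = ‖h‖) ∧
      U 0 = 1 ∧
      (∀ a ∈ SumSemigroup S, ∀ b ∈ SumSemigroup S, U (a + b) = U a ∘L U b) ∧
      (∀ s ∈ SumSemigroup S, U s ∘L adjoint (U s) = 1 ∧ adjoint (U s) ∘L U s = 1) ∧
      (∀ a ∈ SumSemigroup S, ∀ b ∈ SumSemigroup S,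
        adjoint ι ∘L (adjoint (U (negPart' (a - b))) ∘L U (posPart' (a - b))) ∘L ι
          = adjoint (T (negPart' (a - b))) ∘L T (posPart' (a - b)))) :
    -- then the regularity (positivity) condition holds
    ∀ (v : Finset Ω), ∀ s ∈ SumSemigroup S,
      (∑ u ∈ v.powerset, ((-1 : ℂ) ^ u.card) •
        (adjoint (T (restrFun s u)) ∘L T (restrFun s u))).IsPositive := by
  obtain ⟨K, _, _, _, ι, U, hiso, hU0, hUsg, hUuni, hreg⟩ := hdil
  intro v s hs
  -- basic facts about restrFun
  have hs0 : ∀ j, 0 ≤ s j := fun j => (hS j).2.2.1 _ (hs.2 j)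
  have hmem : ∀ u : Finset Ω, restrFun s u ∈ SumSemigroup S := by
    intro u
    constructor
    · apply Set.Finite.subset u.finite_toSet
      intro j hj
      simp only [Function.mem_support] at hj
      rw [Finset.mem_coe]
      by_contra hju
      exact hj (by simp [restrFun, hju])
    · intro j
      by_cases hj : j ∈ u
      · simpa [restrFun, hj] using hs.2 j
      · simpa [restrFun, hj] using (hS j).1
  have hradd : ∀ u w : Finset Ω, Disjoint u w →
      restrFun s u + restrFun s w = restrFun s (u ∪ w) := by
    intro u w hd
    funext j
    simp only [Pi.add_apply, restrFun, Finset.mem_union]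
    by_cases hu : j ∈ u
    · have hw : j ∉ w := Finset.disjoint_left.mp hd hu
      simp [hu, hw]
    · by_cases hw : j ∈ w <;> simp [hu, hw]
  have hTcomp : ∀ u w : Finset Ω, Disjoint u w →
      T (restrFun s (u ∪ w)) = T (restrFun s u) ∘L T (restrFun s w) := by
    intro u w hd
    rw [← hradd u w hd]
    exact hTsg _ (hmem u) _ (hmem w)
  have hUcomp : ∀ u w : Finset Ω, Disjoint u w →
      U (restrFun s (u ∪ w)) = U (restrFun s u) ∘L U (restrFun s w) := by
    intro u w hd
    rw [← hradd u w hd]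
    exact hUsg _ (hmem u) _ (hmem w)
  have hUcomm : ∀ u w : Finset Ω,
      U (restrFun s u) ∘L U (restrFun s w) = U (restrFun s w) ∘L U (restrFun s u) := by
    intro u w
    rw [← hUsg _ (hmem u) _ (hmem w), ← hUsg _ (hmem w) _ (hmem u), add_comm]
  -- pointwise versions of unitarity
  have hUU : ∀ (u : Finset Ω) (y : K),
      U (restrFun s u) (adjoint (U (restrFun s u)) y) = y := by
    intro u y
    have := congrArg (fun M : K →L[ℂ] K => M y) (hUuni _ (hmem u)).1
    simpa using this
  have hUU' : ∀ (u : Finset Ω) (y : K),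
      adjoint (U (restrFun s u)) (U (restrFun s u) y) = y := by
    intro u y
    have := congrArg (fun M : K →L[ℂ] K => M y) (hUuni _ (hmem u)).2
    simpa using this
  have hUcommPt : ∀ (u w : Finset Ω) (y : K),
      U (restrFun s u) (U (restrFun s w) y) = U (restrFun s w) (U (restrFun s u) y) := by
    intro u w y
    have := congrArg (fun M : K →L[ℂ] K => M y) (hUcomm u w)
    simpa using this
  have hUstarPt : ∀ (u w : Finset Ω) (y : K),
      U (restrFun s u) (adjoint (U (restrFun s w)) y)
        = adjoint (U (restrFun s w)) (U (restrFun s u) y) := by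
    intro u w y
    conv_lhs => rw [← hUU' w (U (restrFun s u) (adjoint (U (restrFun s w)) y))]
    rw [hUcommPt w u (adjoint (U (restrFun s w)) y), hUU w y]
  -- key decomposition
  have hUkey : ∀ (u w : Finset Ω) (y : K),
      U (restrFun s u) (adjoint (U (restrFun s w)) y)
        = adjoint (U (restrFun s (w \ u))) (U (restrFun s (u \ w)) y) := by
    intro u w y
    have hd1 : Disjoint (u \ w) (u ∩ w) :=
      Finset.sdiff_disjoint.mono_right Finset.inter_subset_right
    have hd2 : Disjoint (w \ u) (w ∩ u) :=
      Finset.sdiff_disjoint.mono_right Finset.inter_subset_right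
    have d1 := hUcomp (u \ w) (u ∩ w) hd1
    rw [Finset.sdiff_union_inter] at d1
    have d2 := hUcomp (w \ u) (w ∩ u) hd2
    rw [Finset.sdiff_union_inter, Finset.inter_comm w u] at d2
    rw [d1, d2, adjoint_comp]
    simp only [coe_comp', Function.comp_apply]
    rw [hUstarPt (u ∩ w) (u ∩ w), hUU' (u ∩ w)]
    rw [hUstarPt (u \ w) (w \ u)]
  -- pos/neg parts
  have hposneg : ∀ p q : Finset Ω, Disjoint p q →
      posPart' (restrFun s p - restrFun s q) = restrFun s p ∧
      negPart' (restrFun s p - restrFun s q) = restrFun s q := by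
    intro p q hd
    have hpos : posPart' (restrFun s p - restrFun s q) = restrFun s p := by
      funext j
      simp only [posPart', Pi.sub_apply, restrFun]
      by_cases hp : j ∈ p
      · have hq : j ∉ q := Finset.disjoint_left.mp hd hp
        simp [hp, hq, max_eq_left (hs0 j)]
      · by_cases hq : j ∈ q
        · simp [hp, hq, max_eq_right (neg_nonpos.mpr (hs0 j))]
        · simp [hp, hq]
    refine ⟨hpos, ?_⟩
    funext j
    simp only [negPart', hpos, Pi.sub_apply, restrFun]
    by_cases hp : j ∈ p
    · have hq : j ∉ q := Finset.disjoint_left.mp hd hp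
      simp [hp, hq]
    · by_cases hq : j ∈ q <;> simp [hp, hq]
  -- regularity specialized
  have hreg' : ∀ u w : Finset Ω,
      adjoint ι ∘L (adjoint (U (restrFun s (w \ u))) ∘L U (restrFun s (u \ w))) ∘L ι
        = adjoint (T (restrFun s (w \ u))) ∘L T (restrFun s (u \ w)) := by
    intro u w
    have hd : Disjoint (u \ w) (w \ u) :=
      Finset.sdiff_disjoint.mono_right Finset.sdiff_subset
    obtain ⟨hp, hn⟩ := hposneg (u \ w) (w \ u) hd
    have h := hreg _ (hmem (u \ w)) _ (hmem (w \ u))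
    rw [hp, hn] at h
    exact h
  constructor
  · -- self-adjointness
    rw [← ContinuousLinearMap.isSelfAdjoint_iff_isSymmetric, isSelfAdjoint_iff']
    rw [map_sum]
    refine Finset.sum_congr rfl fun u _ => ?_
    have hstar : (starRingEnd ℂ) ((-1 : ℂ) ^ u.card) = (-1 : ℂ) ^ u.card := by
      rw [map_pow, map_neg, map_one]
    rw [LinearIsometryEquiv.map_smulₛₗ]
    rw [adjoint_comp, adjoint_adjoint]
    rw [hstar]
  · -- positivity
    intro h
    set g : Finset Ω → H := fun r => T (restrFun s r) h with hg
    set z : Finset Ω → K :=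
      fun u => ((-1 : ℂ) ^ u.card) • (adjoint (U (restrFun s u)) (ι (g u))) with hz
    have hTuw : ∀ u w : Finset Ω,
        T (restrFun s (w \ u)) (g u) = g (u ∪ w) := by
      intro u w
      have hd : Disjoint (w \ u) u := Finset.sdiff_disjoint
      have hc := hTcomp (w \ u) u hd
      rw [Finset.sdiff_union_self_eq_union, Finset.union_comm w u] at hc
      rw [hg]
      simp only [hc, coe_comp', Function.comp_apply]
    have hzz : ∀ u w : Finset Ω,
        ⟪z u, z w⟫ = ((-1 : ℂ) ^ (u.card + w.card)) * ⟪g (u ∪ w), g (u ∪ w)⟫ := by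
      intro u w
      rw [hz]
      simp only
      rw [inner_smul_left, inner_smul_right]
      have hstar : (starRingEnd ℂ) ((-1 : ℂ) ^ u.card) = (-1 : ℂ) ^ u.card := by
        rw [map_pow, map_neg, map_one]
      rw [hstar]
      have key : ⟪adjoint (U (restrFun s u)) (ι (g u)),
          adjoint (U (restrFun s w)) (ι (g w))⟫ = ⟪g (u ∪ w), g (u ∪ w)⟫ := by
        rw [adjoint_inner_left]
        rw [hUkey u w]
        rw [← adjoint_inner_right ι]
        have happ : adjoint ι (adjoint (U (restrFun s (w \ u)))
              (U (restrFun s (u \ w)) (ι (g w))))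
            = (adjoint ι ∘L (adjoint (U (restrFun s (w \ u)))
                ∘L U (restrFun s (u \ w))) ∘L ι) (g w) := by
          simp only [coe_comp', Function.comp_apply]
        rw [happ, hreg' u w]
        simp only [coe_comp', Function.comp_apply]
        rw [adjoint_inner_right]
        rw [hTuw u w]
        have h2 := hTuw w u
        rw [Finset.union_comm w u] at h2
        rw [h2]
      rw [key]
      ring
    have lhs_eq : ⟪(∑ u ∈ v.powerset, ((-1 : ℂ) ^ u.card) •
          (adjoint (T (restrFun s u)) ∘L T (restrFun s u))) h, h⟫
        = ∑ r ∈ v.powerset, ((-1 : ℂ) ^ r.card) * ⟪g r, g r⟫ := by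
      rw [ContinuousLinearMap.sum_apply, sum_inner]
      refine Finset.sum_congr rfl fun u _ => ?_
      rw [ContinuousLinearMap.smul_apply, inner_smul_left]
      have hstar : (starRingEnd ℂ) ((-1 : ℂ) ^ u.card) = (-1 : ℂ) ^ u.card := by
        rw [map_pow, map_neg, map_one]
      rw [hstar]
      simp only [coe_comp', Function.comp_apply]
      rw [adjoint_inner_left]
    have rhs_eq : ⟪∑ u ∈ v.powerset, z u, ∑ w ∈ v.powerset, z w⟫
        = ∑ r ∈ v.powerset, ((-1 : ℂ) ^ r.card) * ⟪g r, g r⟫ := by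
      rw [sum_inner]
      have : ∀ u ∈ v.powerset, ⟪z u, ∑ w ∈ v.powerset, z w⟫
          = ∑ w ∈ v.powerset, ((-1 : ℂ) ^ (u.card + w.card)) * ⟪g (u ∪ w), g (u ∪ w)⟫ := by
        intro u _
        rw [inner_sum]
        exact Finset.sum_congr rfl fun w _ => hzz u w
      rw [Finset.sum_congr rfl this]
      exact alt_sum_union v (fun r => ⟪g r, g r⟫)
    have main : ⟪(∑ u ∈ v.powerset, ((-1 : ℂ) ^ u.card) •
          (adjoint (T (restrFun s u)) ∘L T (restrFun s u))) h, h⟫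
        = ⟪∑ u ∈ v.powerset, z u, ∑ w ∈ v.powerset, z w⟫ := by
      rw [lhs_eq, rhs_eq]
    show (0:ℝ) ≤ ContinuousLinearMap.reApplyInnerSelf _ h
    rw [ContinuousLinearMap.reApplyInnerSelf]
    rw [main]
    exact inner_self_nonneg
end

section
/- Let Ω be a set, for each i ∈ Ω let S_i be a commensurable unital subsemigroup of ℝ₊, and let S be the semigroup of all finitely supported functions s : Ω → ℝ₊ with s(j) ∈ S_j for all j. Let T = {T_s}_{s∈S} be a semigroup of contractions on a complex Hilbert space H, and suppose U = {U_s}_{s∈S} on K ⊇ H and U' = {U'_s}_{s∈S} on K' ⊇ H are two minimal regular unitary dilations of T (minimal meaning the dilation space is the closed linear span of {U_{s₋}* U_{s₊} h : s ∈ S − S, h ∈ H}). Then there exists a unitary operator W : K → K' that fixes H pointwise and satisfies W U_s = U'_s W for all s ∈ S. -/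
open ContinuousLinearMap

namespace DilAux

lemma natmul_mem {A : Set ℝ} (hA : IsCommensurableSubsemigroup A) {x : ℝ} (hx : x ∈ A) :
    ∀ n : ℕ, (n : ℝ) * x ∈ A
  | 0 => by simpa using hA.1
  | (n+1) => by
      have := hA.2.1 _ (natmul_mem hA hx n) _ hx
      push_cast
      rw [add_mul, one_mul]
      exact this

lemma min_max_mem {A : Set ℝ} (hA : IsCommensurableSubsemigroup A) {x y : ℝ}
    (hx : x ∈ A) (hy : y ∈ A) :
    min x y ∈ A ∧ max (y - x) 0 ∈ A ∧ y = max (y - x) 0 + min x y := by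
  obtain ⟨s₀, hs₀, a, ha⟩ := hA.2.2.2 2 ![x, y] (by
    intro k; fin_cases k <;> simpa [hx, hy])
  have hx' : x = (a 0 : ℝ) * s₀ := by simpa using ha 0
  have hy' : y = (a 1 : ℝ) * s₀ := by simpa using ha 1
  have hs0 : 0 ≤ s₀ := hA.2.2.1 _ hs₀
  have hmin : min x y = ((min (a 0) (a 1) : ℕ) : ℝ) * s₀ := by
    rcases le_total (a 0) (a 1) with h | h
    · rw [min_eq_left (by rw [hx', hy']; exact
        mul_le_mul_of_nonneg_right (by exact_mod_cast h) hs0), hx',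
        Nat.min_def, if_pos h]
    · rw [min_eq_right (by rw [hx', hy']; exact
        mul_le_mul_of_nonneg_right (by exact_mod_cast h) hs0), hy',
        min_eq_right (by exact_mod_cast h)]
  have hmax : max (y - x) 0 = ((a 1 - a 0 : ℕ) : ℝ) * s₀ := by
    rcases le_total (a 0) (a 1) with h | h
    · rw [max_eq_left (by rw [hx', hy']; nlinarith [(by exact_mod_cast h : (a 0:ℝ) ≤ a 1)]),
        hx', hy', Nat.cast_sub h]
      ring
    · rw [max_eq_right (by rw [hx', hy']; nlinarith [(by exact_mod_cast h : (a 1:ℝ) ≤ a 0)]),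
        Nat.sub_eq_zero_of_le h]
      simp
  refine ⟨hmin ▸ natmul_mem hA hs₀ _, hmax ▸ natmul_mem hA hs₀ _, ?_⟩
  rw [hmax, hmin, hy', ← add_mul, ← Nat.cast_add]
  have : a 1 - a 0 + min (a 0) (a 1) = a 1 := by omega
  rw [this]

end DilAux

namespace DilAux2
open DilAux

variable {Ω : Type} {S : Ω → Set ℝ}

lemma zero_mem (hS : ∀ i, IsCommensurableSubsemigroup (S i)) :
    (0 : Ω → ℝ) ∈ SumSemigroup S :=
  ⟨by simp, fun j => (hS j).1⟩

lemma add_mem (hS : ∀ i, IsCommensurableSubsemigroup (S i)) {p q : Ω → ℝ}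
    (hp : p ∈ SumSemigroup S) (hq : q ∈ SumSemigroup S) : p + q ∈ SumSemigroup S := by
  refine ⟨(hp.1.union hq.1).subset ?_, fun j => (hS j).2.1 _ (hp.2 j) _ (hq.2 j)⟩
  intro j hj
  by_contra h
  simp only [Set.mem_union, Function.mem_support, not_or, not_not] at h
  exact hj (by simp [Pi.add_apply, h.1, h.2])

lemma max_sub (t : ℝ) : max t 0 - t = max (-t) 0 := by
  rcases le_total t 0 with h | h
  · rw [max_eq_right h, max_eq_left (by linarith), zero_sub]
  · rw [max_eq_left h, max_eq_right (by linarith), sub_self]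

lemma decomp (hS : ∀ i, IsCommensurableSubsemigroup (S i)) {p q : Ω → ℝ}
    (hp : p ∈ SumSemigroup S) (hq : q ∈ SumSemigroup S) :
    ∃ r ∈ SumSemigroup S, negPart' (q - p) ∈ SumSemigroup S ∧
      posPart' (q - p) ∈ SumSemigroup S ∧
      q = posPart' (q - p) + r ∧ p = negPart' (q - p) + r := by
  have hposj : ∀ j, posPart' (q - p) j = max (q j - p j) 0 := fun j => rfl
  have hnegj : ∀ j, negPart' (q - p) j = max (p j - q j) 0 := by
    intro j
    show max ((q - p) j) 0 - (q - p) j = _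
    rw [Pi.sub_apply, max_sub, neg_sub]
  have hsupp : ∀ (f : Ω → ℝ), (∀ j, p j = 0 → q j = 0 → f j = 0) →
      (Function.support f).Finite := by
    intro f hf
    refine (hp.1.union hq.1).subset ?_
    intro j hj
    by_contra h
    simp only [Set.mem_union, Function.mem_support, not_or, not_not] at h
    exact hj (hf j h.1 h.2)
  refine ⟨fun j => min (p j) (q j), ⟨hsupp _ fun j h1 h2 => by simp [h1, h2],
      fun j => (min_max_mem (hS j) (hp.2 j) (hq.2 j)).1⟩,
    ⟨hsupp _ fun j h1 h2 => by rw [hnegj]; simp [h1, h2],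
      fun j => by rw [hnegj]; exact (min_max_mem (hS j) (hq.2 j) (hp.2 j)).2.1⟩,
    ⟨hsupp _ fun j h1 h2 => by rw [hposj]; simp [h1, h2],
      fun j => by rw [hposj]; exact (min_max_mem (hS j) (hp.2 j) (hq.2 j)).2.1⟩, ?_, ?_⟩
  · funext j
    rw [Pi.add_apply, hposj]
    exact (min_max_mem (hS j) (hp.2 j) (hq.2 j)).2.2
  · funext j
    rw [Pi.add_apply, hnegj]
    have := (min_max_mem (hS j) (hq.2 j) (hp.2 j)).2.2
    rwa [min_comm] at this

end DilAux2

namespace DilAux3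
open DilAux DilAux2 ContinuousLinearMap

variable {Ω : Type} {S : Ω → Set ℝ}
variable {K : Type} [NormedAddCommGroup K] [InnerProductSpace ℂ K] [CompleteSpace K]
variable (hS : ∀ i, IsCommensurableSubsemigroup (S i))
variable (U : (Ω → ℝ) → K →L[ℂ] K)
variable (hUsg : ∀ a ∈ SumSemigroup S, ∀ b ∈ SumSemigroup S, U (a + b) = U a ∘L U b)
variable (hUun : ∀ s ∈ SumSemigroup S, U s ∘L adjoint (U s) = 1 ∧ adjoint (U s) ∘L U s = 1)

section
include hUsg

lemma comm {a b : Ω → ℝ} (ha : a ∈ SumSemigroup S) (hb : b ∈ SumSemigroup S) :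
    U a ∘L U b = U b ∘L U a := by
  rw [← hUsg a ha b hb, ← hUsg b hb a ha, add_comm]

include hUun

lemma commAdj {a b : Ω → ℝ} (ha : a ∈ SumSemigroup S) (hb : b ∈ SumSemigroup S) :
    U a ∘L adjoint (U b) = adjoint (U b) ∘L U a := by
  have h1 := (hUun b hb).1
  have h2 := (hUun b hb).2
  calc U a ∘L adjoint (U b) = 1 ∘L (U a ∘L adjoint (U b)) := by simp [one_def]
    _ = adjoint (U b) ∘L ((U b ∘L U a) ∘L adjoint (U b)) := by
        rw [← h2]; simp only [comp_assoc]
    _ = adjoint (U b) ∘L ((U a ∘L U b) ∘L adjoint (U b)) := by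
        rw [comm U hUsg hb ha]
    _ = adjoint (U b) ∘L (U a ∘L (U b ∘L adjoint (U b))) := by simp only [comp_assoc]
    _ = adjoint (U b) ∘L U a := by rw [h1]; simp [one_def]

include hS in
/-- Key identity: `(U p)† ∘ U q = (U (q-p)₋)† ∘ U (q-p)₊`. -/
lemma keyId {p q : Ω → ℝ} (hp : p ∈ SumSemigroup S) (hq : q ∈ SumSemigroup S) :
    adjoint (U p) ∘L U q
      = adjoint (U (negPart' (q - p))) ∘L U (posPart' (q - p)) := by
  obtain ⟨r, hr, hn, hpos, hqe, hpe⟩ := decomp hS hp hq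
  set n := negPart' (q - p)
  set m := posPart' (q - p)
  have hUq : U q = U m ∘L U r := by rw [hqe]; exact hUsg m hpos r hr
  have hUp : U p = U n ∘L U r := by rw [hpe]; exact hUsg n hn r hr
  rw [hUq, hUp, adjoint_comp]
  calc (adjoint (U r) ∘L adjoint (U n)) ∘L (U m ∘L U r)
      = adjoint (U r) ∘L (adjoint (U n) ∘L (U m ∘L U r)) := by simp only [comp_assoc]
    _ = adjoint (U r) ∘L (adjoint (U n) ∘L (U r ∘L U m)) := by
        rw [comm U hUsg hpos hr]
    _ = adjoint (U r) ∘L ((adjoint (U n) ∘L U r) ∘L U m) := by simp only [comp_assoc]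
    _ = adjoint (U r) ∘L ((U r ∘L adjoint (U n)) ∘L U m) := by
        rw [← commAdj U hUsg hUun hr hn]
    _ = (adjoint (U r) ∘L U r) ∘L (adjoint (U n) ∘L U m) := by simp only [comp_assoc]
    _ = adjoint (U n) ∘L U m := by rw [(hUun r hr).2]; simp [one_def]

end

end DilAux3

namespace DilAux4
open DilAux DilAux2 DilAux3 ContinuousLinearMap

variable {Ω : Type} {S : Ω → Set ℝ}
variable {H : Type} [NormedAddCommGroup H] [InnerProductSpace ℂ H] [CompleteSpace H]
variable {K : Type} [NormedAddCommGroup K] [InnerProductSpace ℂ K] [CompleteSpace K]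

local notation "⟪" x ", " y "⟫" => @inner ℂ _ _ x y

/-- Inner products of generators are determined by `T`. -/
lemma inner_formula (hS : ∀ i, IsCommensurableSubsemigroup (S i))
    (T : (Ω → ℝ) → H →L[ℂ] H)
    (ι : H →L[ℂ] K) (U : (Ω → ℝ) → K →L[ℂ] K)
    (hUsg : ∀ a ∈ SumSemigroup S, ∀ b ∈ SumSemigroup S, U (a + b) = U a ∘L U b)
    (hUun : ∀ s ∈ SumSemigroup S, U s ∘L adjoint (U s) = 1 ∧ adjoint (U s) ∘L U s = 1)
    (hreg : ∀ a ∈ SumSemigroup S, ∀ b ∈ SumSemigroup S,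
      adjoint ι ∘L (adjoint (U (negPart' (a - b))) ∘L U (posPart' (a - b))) ∘L ι
        = adjoint (T (negPart' (a - b))) ∘L T (posPart' (a - b)))
    {a₁ b₁ a₂ b₂ : Ω → ℝ}
    (ha₁ : a₁ ∈ SumSemigroup S) (hb₁ : b₁ ∈ SumSemigroup S)
    (ha₂ : a₂ ∈ SumSemigroup S) (hb₂ : b₂ ∈ SumSemigroup S)
    (h₁ h₂ : H) :
    ⟪adjoint (U b₁) (U a₁ (ι h₁)), adjoint (U b₂) (U a₂ (ι h₂))⟫
      = (starRingEnd ℂ)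
          ⟪h₂, (adjoint (T (negPart' ((b₂ + a₁) - (b₁ + a₂)))) ∘L
            T (posPart' ((b₂ + a₁) - (b₁ + a₂)))) h₁⟫ := by
  have hd : b₂ + a₁ ∈ SumSemigroup S := add_mem hS hb₂ ha₁
  have he : b₁ + a₂ ∈ SumSemigroup S := add_mem hS hb₁ ha₂
  have hC : adjoint (U a₂) ∘L (U b₂ ∘L (adjoint (U b₁) ∘L U a₁))
      = adjoint (U (negPart' ((b₂ + a₁) - (b₁ + a₂)))) ∘L
        U (posPart' ((b₂ + a₁) - (b₁ + a₂))) := by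
    calc adjoint (U a₂) ∘L (U b₂ ∘L (adjoint (U b₁) ∘L U a₁))
        = adjoint (U a₂) ∘L ((U b₂ ∘L adjoint (U b₁)) ∘L U a₁) := by
          simp only [comp_assoc]
      _ = adjoint (U a₂) ∘L ((adjoint (U b₁) ∘L U b₂) ∘L U a₁) := by
          rw [commAdj U hUsg hUun hb₂ hb₁]
      _ = (adjoint (U a₂) ∘L adjoint (U b₁)) ∘L (U b₂ ∘L U a₁) := by
          simp only [comp_assoc]
      _ = adjoint (U b₁ ∘L U a₂) ∘L U (b₂ + a₁) := by
          rw [adjoint_comp, hUsg b₂ hb₂ a₁ ha₁]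
      _ = adjoint (U (b₁ + a₂)) ∘L U (b₂ + a₁) := by rw [hUsg b₁ hb₁ a₂ ha₂]
      _ = _ := keyId hS U hUsg hUun he hd
  calc ⟪adjoint (U b₁) (U a₁ (ι h₁)), adjoint (U b₂) (U a₂ (ι h₂))⟫
      = ⟪U b₂ (adjoint (U b₁) (U a₁ (ι h₁))), U a₂ (ι h₂)⟫ := by
        rw [adjoint_inner_right]
    _ = ⟪adjoint (U a₂) (U b₂ (adjoint (U b₁) (U a₁ (ι h₁)))), ι h₂⟫ := by
        rw [adjoint_inner_left]
    _ = ⟪(adjoint (U a₂) ∘L (U b₂ ∘L (adjoint (U b₁) ∘L U a₁))) (ι h₁), ι h₂⟫ := rfl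
    _ = ⟪(adjoint (U (negPart' ((b₂ + a₁) - (b₁ + a₂)))) ∘L
          U (posPart' ((b₂ + a₁) - (b₁ + a₂)))) (ι h₁), ι h₂⟫ := by rw [hC]
    _ = (starRingEnd ℂ) ⟪ι h₂, (adjoint (U (negPart' ((b₂ + a₁) - (b₁ + a₂)))) ∘L
          U (posPart' ((b₂ + a₁) - (b₁ + a₂)))) (ι h₁)⟫ := by rw [inner_conj_symm]
    _ = (starRingEnd ℂ) ⟪h₂, (adjoint ι ∘L ((adjoint (U (negPart' ((b₂ + a₁) - (b₁ + a₂)))) ∘L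
          U (posPart' ((b₂ + a₁) - (b₁ + a₂)))) ∘L ι)) h₁⟫ := by
        rw [← adjoint_inner_right]; rfl
    _ = _ := by
        have := hreg (b₂ + a₁) hd (b₁ + a₂) he
        rw [← comp_assoc] at this ⊢
        rw [this]

end DilAux4


set_option maxHeartbeats 1000000

/-- **Uniqueness of the minimal regular unitary dilation.**  Any two minimal regular
unitary dilations of a semigroup of contractions over `S = Σᵢ Sᵢ` are unitarily
equivalent via a unitary fixing `H` and intertwining the dilations. -/
theorem minimal_regular_unitary_dilation_unique
    {Ω : Type} {H : Type} [NormedAddCommGroup H] [InnerProductSpace ℂ H]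
    [CompleteSpace H]
    {K : Type} [NormedAddCommGroup K] [InnerProductSpace ℂ K] [CompleteSpace K]
    {K' : Type} [NormedAddCommGroup K'] [InnerProductSpace ℂ K'] [CompleteSpace K']
    (S : Ω → Set ℝ) (hS : ∀ i, IsCommensurableSubsemigroup (S i))
    -- `T` is a semigroup of contractions on `H` over `SumSemigroup S`
    (T : (Ω → ℝ) → H →L[ℂ] H)
    (hT0 : T 0 = 1)
    (hTsg : ∀ a ∈ SumSemigroup S, ∀ b ∈ SumSemigroup S, T (a + b) = T a ∘L T b)
    (hTcontr : ∀ s ∈ SumSemigroup S, ‖T s‖ ≤ 1)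
    -- `U` on `K ⊇ H` is a minimal regular unitary dilation of `T`
    (ι : H →L[ℂ] K) (hι : ∀ h : H, ‖ι h‖ = ‖h‖)
    (U : (Ω → ℝ) → K →L[ℂ] K)
    (hU0 : U 0 = 1)
    (hUsg : ∀ a ∈ SumSemigroup S, ∀ b ∈ SumSemigroup S, U (a + b) = U a ∘L U b)
    (hUun : ∀ s ∈ SumSemigroup S, U s ∘L adjoint (U s) = 1 ∧ adjoint (U s) ∘L U s = 1)
    (hreg : ∀ a ∈ SumSemigroup S, ∀ b ∈ SumSemigroup S,
      adjoint ι ∘L (adjoint (U (negPart' (a - b))) ∘L U (posPart' (a - b))) ∘L ι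
        = adjoint (T (negPart' (a - b))) ∘L T (posPart' (a - b)))
    (hmin : (Submodule.span ℂ {x : K | ∃ a ∈ SumSemigroup S, ∃ b ∈ SumSemigroup S,
        ∃ h : H, x = adjoint (U (negPart' (a - b)))
          (U (posPart' (a - b)) (ι h))}).topologicalClosure = ⊤)
    -- `U'` on `K' ⊇ H` is a minimal regular unitary dilation of `T`
    (ι' : H →L[ℂ] K') (hι' : ∀ h : H, ‖ι' h‖ = ‖h‖)
    (U' : (Ω → ℝ) → K' →L[ℂ] K')
    (hU'0 : U' 0 = 1)
    (hU'sg : ∀ a ∈ SumSemigroup S, ∀ b ∈ SumSemigroup S, U' (a + b) = U' a ∘L U' b)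
    (hU'un : ∀ s ∈ SumSemigroup S,
      U' s ∘L adjoint (U' s) = 1 ∧ adjoint (U' s) ∘L U' s = 1)
    (hreg' : ∀ a ∈ SumSemigroup S, ∀ b ∈ SumSemigroup S,
      adjoint ι' ∘L (adjoint (U' (negPart' (a - b))) ∘L U' (posPart' (a - b))) ∘L ι'
        = adjoint (T (negPart' (a - b))) ∘L T (posPart' (a - b)))
    (hmin' : (Submodule.span ℂ {x : K' | ∃ a ∈ SumSemigroup S, ∃ b ∈ SumSemigroup S,
        ∃ h : H, x = adjoint (U' (negPart' (a - b)))
          (U' (posPart' (a - b)) (ι' h))}).topologicalClosure = ⊤) :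
    -- then there is a unitary `W : K → K'` fixing `H` and intertwining `U`, `U'`
    ∃ W : K ≃ₗᵢ[ℂ] K',
      (∀ h : H, W (ι h) = ι' h) ∧
      ∀ s ∈ SumSemigroup S, ∀ x : K, W (U s x) = U' s (W x) := by
  classical
  -- the set of paired generators
  set Z : Set (K × K') := {z | ∃ a ∈ SumSemigroup S, ∃ b ∈ SumSemigroup S, ∃ h : H,
    z = (adjoint (U b) (U a (ι h)), adjoint (U' b) (U' a (ι' h)))} with hZdef
  set M : Submodule ℂ (K × K') := Submodule.span ℂ Z with hMdef
  -- inner products of corresponding components agree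
  have hIPgen : ∀ z ∈ Z, ∀ w ∈ Z,
      (inner ℂ z.1 w.1 : ℂ) = inner ℂ z.2 w.2 := by
    rintro _ ⟨a₁, ha₁, b₁, hb₁, h₁, rfl⟩ _ ⟨a₂, ha₂, b₂, hb₂, h₂, rfl⟩
    rw [show ((adjoint (U b₁) (U a₁ (ι h₁)), adjoint (U' b₁) (U' a₁ (ι' h₁))) :
        K × K').1 = adjoint (U b₁) (U a₁ (ι h₁)) from rfl]
    rw [DilAux4.inner_formula hS T ι U hUsg hUun hreg ha₁ hb₁ ha₂ hb₂ h₁ h₂,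
      DilAux4.inner_formula hS T ι' U' hU'sg hU'un hreg' ha₁ hb₁ ha₂ hb₂ h₁ h₂]
  have hIP1 : ∀ z ∈ Z, ∀ w ∈ M, (inner ℂ z.1 w.1 : ℂ) = inner ℂ z.2 w.2 := by
    intro z hz w hw
    induction hw using Submodule.span_induction with
    | mem x hx => exact hIPgen z hz x hx
    | zero => simp
    | add x y hx hy ihx ihy => simp only [Prod.fst_add, Prod.snd_add,
        inner_add_right, ihx, ihy]
    | smul c x hx ih => simp only [Prod.smul_fst, Prod.smul_snd,
        inner_smul_right, ih]
  have hIP : ∀ z ∈ M, ∀ w ∈ M, (inner ℂ z.1 w.1 : ℂ) = inner ℂ z.2 w.2 := by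
    intro z hz
    induction hz using Submodule.span_induction with
    | mem x hx => exact hIP1 x hx
    | zero => intro w hw; simp
    | add x y hx hy ihx ihy => intro w hw; simp only [Prod.fst_add, Prod.snd_add,
        inner_add_left, ihx w hw, ihy w hw]
    | smul c x hx ih => intro w hw; simp only [Prod.smul_fst, Prod.smul_snd,
        inner_smul_left, ih w hw]
  -- hence norms agree
  have hnorm12 : ∀ z ∈ M, ‖z.2‖ = ‖z.1‖ := by
    intro z hz
    have h0 := hIP z hz z hz
    have h1 : ‖z.1‖ ^ 2 = ‖z.2‖ ^ 2 := by
      rw [InnerProductSpace.norm_sq_eq_re_inner (𝕜 := ℂ), InnerProductSpace.norm_sq_eq_re_inner (𝕜 := ℂ), h0]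
    have := congrArg Real.sqrt h1
    rwa [Real.sqrt_sq (norm_nonneg _), Real.sqrt_sq (norm_nonneg _), eq_comm] at this
  -- the two coordinate projections of `M`
  set p : M →L[ℂ] K := (ContinuousLinearMap.fst ℂ K K').comp M.subtypeL with hpdef
  set q : M →L[ℂ] K' := (ContinuousLinearMap.snd ℂ K K').comp M.subtypeL with hqdef
  have hpq : ∀ z : M, ‖q z‖ = ‖p z‖ := fun z => hnorm12 _ z.2
  have hpn : ∀ z : M, ‖p z‖ = ‖z‖ := by
    intro z
    show ‖(z : K × K').1‖ = ‖(z : K × K')‖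
    rw [Prod.norm_def, hnorm12 _ z.2, max_self]
  have hqn : ∀ z : M, ‖q z‖ = ‖z‖ := fun z => (hpq z).trans (hpn z)
  have hpI : Isometry p := AddMonoidHomClass.isometry_of_norm p hpn
  have hqI : Isometry q := AddMonoidHomClass.isometry_of_norm q hqn
  -- dense ranges
  have hdp : DenseRange p := by
    have hd : Dense (↑(Submodule.span ℂ {x : K | ∃ a ∈ SumSemigroup S,
        ∃ b ∈ SumSemigroup S, ∃ h : H, x = adjoint (U (negPart' (a - b)))
          (U (posPart' (a - b)) (ι h))}) : Set K) :=
      Submodule.dense_iff_topologicalClosure_eq_top.mpr hmin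
    refine hd.mono ?_
    have hle : Submodule.span ℂ {x : K | ∃ a ∈ SumSemigroup S,
        ∃ b ∈ SumSemigroup S, ∃ h : H, x = adjoint (U (negPart' (a - b)))
          (U (posPart' (a - b)) (ι h))} ≤ M.map (LinearMap.fst ℂ K K') := by
      refine Submodule.span_le.2 ?_
      rintro _ ⟨a, ha, b, hb, h, rfl⟩
      obtain ⟨r, hr, hn, hpos, -, -⟩ := DilAux2.decomp hS hb ha
      exact ⟨(adjoint (U (negPart' (a - b))) (U (posPart' (a - b)) (ι h)),
        adjoint (U' (negPart' (a - b))) (U' (posPart' (a - b)) (ι' h))),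
        Submodule.subset_span ⟨posPart' (a - b), hpos, negPart' (a - b), hn, h, rfl⟩, rfl⟩
    intro x hx
    obtain ⟨z, hzM, rfl⟩ := hle hx
    exact ⟨⟨z, hzM⟩, rfl⟩
  have hdq : DenseRange q := by
    have hd : Dense (↑(Submodule.span ℂ {x : K' | ∃ a ∈ SumSemigroup S,
        ∃ b ∈ SumSemigroup S, ∃ h : H, x = adjoint (U' (negPart' (a - b)))
          (U' (posPart' (a - b)) (ι' h))}) : Set K') :=
      Submodule.dense_iff_topologicalClosure_eq_top.mpr hmin'
    refine hd.mono ?_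
    have hle : Submodule.span ℂ {x : K' | ∃ a ∈ SumSemigroup S,
        ∃ b ∈ SumSemigroup S, ∃ h : H, x = adjoint (U' (negPart' (a - b)))
          (U' (posPart' (a - b)) (ι' h))} ≤ M.map (LinearMap.snd ℂ K K') := by
      refine Submodule.span_le.2 ?_
      rintro _ ⟨a, ha, b, hb, h, rfl⟩
      obtain ⟨r, hr, hn, hpos, -, -⟩ := DilAux2.decomp hS hb ha
      exact ⟨(adjoint (U (negPart' (a - b))) (U (posPart' (a - b)) (ι h)),
        adjoint (U' (negPart' (a - b))) (U' (posPart' (a - b)) (ι' h))),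
        Submodule.subset_span ⟨posPart' (a - b), hpos, negPart' (a - b), hn, h, rfl⟩, rfl⟩
    intro x hx
    obtain ⟨z, hzM, rfl⟩ := hle hx
    exact ⟨⟨z, hzM⟩, rfl⟩
  -- the extensions
  set W₁ : K →L[ℂ] K' := q.extend p with hW₁def
  set W₂ : K' →L[ℂ] K := p.extend q with hW₂def
  have hW₁p : ∀ z : M, W₁ (p z) = q z := fun z =>
    ContinuousLinearMap.extend_eq (f := q) (e := p) hdp hpI.isUniformInducing z
  have hW₂q : ∀ z : M, W₂ (q z) = p z := fun z =>
    ContinuousLinearMap.extend_eq (f := p) (e := q) hdq hqI.isUniformInducing z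
  -- inverse identities
  have hW21 : ∀ x : K, W₂ (W₁ x) = x := by
    have := hdp.equalizer (W₂.continuous.comp W₁.continuous) continuous_id
      (funext fun z => by
        show W₂ (W₁ (p z)) = p z
        rw [hW₁p, hW₂q])
    exact fun x => congrFun this x
  have hW12 : ∀ x : K', W₁ (W₂ x) = x := by
    have := hdq.equalizer (W₁.continuous.comp W₂.continuous) continuous_id
      (funext fun z => by
        show W₁ (W₂ (q z)) = q z
        rw [hW₂q, hW₁p])
    exact fun x => congrFun this x
  -- `W₁` is isometric
  have hWnorm : ∀ x : K, ‖W₁ x‖ = ‖x‖ := by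
    have := hdp.equalizer (continuous_norm.comp W₁.continuous) continuous_norm
      (funext fun z => by
        show ‖W₁ (p z)‖ = ‖p z‖
        rw [hW₁p, hpq])
    exact fun x => congrFun this x
  -- assemble the unitary
  set E : K ≃ₗ[ℂ] K' := LinearEquiv.ofLinear (W₁ : K →ₗ[ℂ] K') (W₂ : K' →ₗ[ℂ] K)
    (LinearMap.ext hW12) (LinearMap.ext hW21) with hEdef
  refine ⟨⟨E, fun x => hWnorm x⟩, ?_, ?_⟩
  · -- fixes H
    intro h
    have hz : ((ι h, ι' h) : K × K') ∈ Z := by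
      refine ⟨0, DilAux2.zero_mem hS, 0, DilAux2.zero_mem hS, h, ?_⟩
      rw [hU0, hU'0]
      simp [ContinuousLinearMap.one_def, adjoint_id]
    show W₁ (ι h) = ι' h
    exact hW₁p ⟨(ι h, ι' h), Submodule.subset_span hz⟩
  · -- intertwines
    intro s hs x
    set Φ : K × K' →L[ℂ] K × K' := (U s).prodMap (U' s) with hΦdef
    have hΦZ : ∀ z ∈ Z, Φ z ∈ Z := by
      rintro _ ⟨a, ha, b, hb, h, rfl⟩
      refine ⟨s + a, DilAux2.add_mem hS hs ha, b, hb, h, ?_⟩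
      have e1 : U s (adjoint (U b) (U a (ι h))) = adjoint (U b) (U (s + a) (ι h)) := by
        calc U s (adjoint (U b) (U a (ι h)))
            = (U s ∘L adjoint (U b)) (U a (ι h)) := rfl
          _ = (adjoint (U b) ∘L U s) (U a (ι h)) := by
              rw [DilAux3.commAdj U hUsg hUun hs hb]
          _ = adjoint (U b) ((U s ∘L U a) (ι h)) := rfl
          _ = adjoint (U b) (U (s + a) (ι h)) := by rw [← hUsg s hs a ha]
      have e2 : U' s (adjoint (U' b) (U' a (ι' h))) = adjoint (U' b) (U' (s + a) (ι' h)) := by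
        calc U' s (adjoint (U' b) (U' a (ι' h)))
            = (U' s ∘L adjoint (U' b)) (U' a (ι' h)) := rfl
          _ = (adjoint (U' b) ∘L U' s) (U' a (ι' h)) := by
              rw [DilAux3.commAdj U' hU'sg hU'un hs hb]
          _ = adjoint (U' b) ((U' s ∘L U' a) (ι' h)) := rfl
          _ = adjoint (U' b) (U' (s + a) (ι' h)) := by rw [← hU'sg s hs a ha]
      show (U s (adjoint (U b) (U a (ι h))), U' s (adjoint (U' b) (U' a (ι' h)))) = _
      rw [e1, e2]
    have hΦM : ∀ z ∈ M, Φ z ∈ M := by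
      intro z hz
      have hle : M ≤ Submodule.comap (Φ : K × K' →ₗ[ℂ] K × K') M :=
        Submodule.span_le.2 fun w hw => Submodule.subset_span (hΦZ w hw)
      exact hle hz
    have key : ∀ y : K, W₁ (U s y) = U' s (W₁ y) := by
      have := hdp.equalizer (W₁.continuous.comp (U s).continuous)
        ((U' s).continuous.comp W₁.continuous)
        (funext fun z => by
          show W₁ (U s (p z)) = U' s (W₁ (p z))
          have hz' : Φ (z : K × K') ∈ M := hΦM _ z.2
          have h1 : U s (p z) = p ⟨Φ (z : K × K'), hz'⟩ := rfl
          have h2 : q ⟨Φ (z : K × K'), hz'⟩ = U' s (q z) := rfl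
          rw [h1, hW₁p, h2, hW₁p])
      exact fun y => congrFun this y
    exact key x
end

section
/- Let T₁, …, T_n be contractions on a complex Hilbert space H that doubly commute, i.e., for all i ≠ j, T_i T_j = T_j T_i and T_i T_j* = T_j* T_i. Then for every subset-indexed products T_u := ∏_{j∈u} T_j (u ⊆ {1,…,n}), the operator ∑_{u ⊆ {1,…,n}} (−1)^{|u|} T_u* T_u is positive semidefinite. -/
open ContinuousLinearMap

section Aux

variable {H : Type} [NormedAddCommGroup H] [InnerProductSpace ℂ H] [CompleteSpace H]

/-- Anything commuting with a selfadjoint operator commutes with its real continuous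
functional calculus. -/
lemma my_commute_cfc (a b : H →L[ℂ] H) (ha : IsSelfAdjoint a) (hab : Commute a b)
    (f : ℝ → ℝ) : Commute b (cfc f a) := by
  by_cases hf : ContinuousOn f (spectrum ℝ a)
  · rw [cfc_apply f a ha hf]
    have hφc : Continuous (cfcHom (R := ℝ) ha (A := H →L[ℂ] H)) := cfcHom_continuous ha
    have key : ∀ g : C(spectrum ℝ a, ℝ), Commute b (cfcHom ha g) := by
      intro g
      induction g using ContinuousMap.induction_on_of_compact with
      | const r =>
        have h1 : (ContinuousMap.const (spectrum ℝ a) r) =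
            algebraMap ℝ C(spectrum ℝ a, ℝ) r := rfl
        rw [h1, AlgHomClass.commutes]
        exact (Algebra.commutes r b).symm
      | id =>
        rw [cfcHom_id ha]
        exact hab.symm
      | star_id =>
        rw [star_trivial, cfcHom_id ha]
        exact hab.symm
      | add f g hf hg => rw [map_add]; exact hf.add_right hg
      | mul f g hf hg => rw [map_mul]; exact hf.mul_right hg
      | frequently f hf =>
        have hcl : IsClosed {g : C(spectrum ℝ a, ℝ) | Commute b (cfcHom ha g)} := by
          have h2 : {g : C(spectrum ℝ a, ℝ) | Commute b (cfcHom ha g)} =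
              (cfcHom ha (A := H →L[ℂ] H)) ⁻¹' {x | b * x = x * b} := rfl
          rw [h2]
          exact (isClosed_eq (continuous_const.mul continuous_id)
            (continuous_id.mul continuous_const)).preimage hφc
        exact hcl.closure_subset (mem_closure_iff_frequently.mpr hf)
    exact key _
  · rw [cfc_apply_of_not_continuousOn a hf]
    exact Commute.zero_right b

/-- The product of two commuting nonnegative operators is nonnegative. -/
lemma my_mul_nonneg_of_commute {a b : H →L[ℂ] H} (ha : 0 ≤ a) (hb : 0 ≤ b)
    (hab : Commute a b) : 0 ≤ a * b := by
  have hsa : IsSelfAdjoint a := ((nonneg_iff_isPositive a).mp ha).isSelfAdjoint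
  set r := cfc Real.sqrt a with hr
  have hrsa : IsSelfAdjoint r := cfc_predicate _ _
  have hrr : r * r = a := by
    rw [hr, ← cfc_mul Real.sqrt Real.sqrt a]
    have h3 : cfc (fun x : ℝ => Real.sqrt x * Real.sqrt x) a = cfc (id : ℝ → ℝ) a :=
      cfc_congr fun x hx => Real.mul_self_sqrt (spectrum_nonneg_of_nonneg ha hx)
    rw [h3]
    exact cfc_id ℝ a
  have hbr : Commute b r := my_commute_cfc a b hsa hab Real.sqrt
  have key : a * b = star r * b * r := by
    rw [hrsa.star_eq, ← hrr, mul_assoc, mul_assoc, hbr.eq]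
  rw [key]
  exact star_left_conjugate_nonneg hb r

/-- For a contraction `T`, `1 - T* T ≥ 0`. -/
lemma my_one_sub_star_mul_self_nonneg (T : H →L[ℂ] H) (h : ‖T‖ ≤ 1) :
    0 ≤ 1 - star T * T := by
  rw [nonneg_iff_isPositive]
  constructor
  · exact (IsSelfAdjoint.one (R := H →L[ℂ] H)).sub (IsSelfAdjoint.star_mul_self T) |>.isSymmetric
  · intro x
    have hTx : ‖T x‖ ≤ ‖x‖ := by
      calc ‖T x‖ ≤ ‖T‖ * ‖x‖ := T.le_opNorm x
        _ ≤ 1 * ‖x‖ := mul_le_mul_of_nonneg_right h (norm_nonneg x)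
        _ = ‖x‖ := one_mul _
    have h1 : (1 - star T * T).reApplyInnerSelf x = ‖x‖ ^ 2 - ‖T x‖ ^ 2 := by
      simp only [reApplyInnerSelf_apply, sub_apply, one_apply, mul_apply,
        star_eq_adjoint, inner_sub_left]
      rw [mul_apply_eq_comp, one_apply_eq_self, adjoint_inner_left, map_sub,
        ← inner_self_eq_norm_sq (𝕜 := ℂ) x, ← inner_self_eq_norm_sq (𝕜 := ℂ) (T x)]
    rw [h1]
    nlinarith [norm_nonneg (T x), norm_nonneg x]

end Aux

/-- **Doubly commuting contractions satisfy the regularity positivity condition.**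
If `T₁, …, Tₙ` are doubly commuting contractions on a complex Hilbert space, then
`∑_{u ⊆ {1,…,n}} (-1)^{|u|} T_u* T_u ≥ 0`, where `T_u = ∏_{j ∈ u} T_j`. -/
theorem doubly_commuting_contractions_alternating_sum_isPositive
    {H : Type} [NormedAddCommGroup H] [InnerProductSpace ℂ H] [CompleteSpace H]
    (n : ℕ) (T : Fin n → H →L[ℂ] H)
    (hcontr : ∀ i, ‖T i‖ ≤ 1)
    (hcomm : ∀ i j, i ≠ j → Commute (T i) (T j))
    (hdcomm : ∀ i j, i ≠ j → T i ∘L adjoint (T j) = adjoint (T j) ∘L T i) :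
    (∑ u : Finset (Fin n), ((-1 : ℂ) ^ u.card) •
      (adjoint (u.noncommProd T (fun a _ b _ hab => hcomm a b hab)) ∘L
        u.noncommProd T (fun a _ b _ hab => hcomm a b hab))).IsPositive := by
  classical
  rw [← nonneg_iff_isPositive]
  set Tu : Finset (Fin n) → (H →L[ℂ] H) :=
    fun u => u.noncommProd T (fun a _ b _ hab => hcomm a b hab) with hTu
  have hcT : ∀ (i : Fin n) (u : Finset (Fin n)), i ∉ u → Commute (T i) (Tu u) := by
    intro i u hi
    exact Finset.noncommProd_commute _ _ _ _ fun x hx => hcomm i x (fun h => hi (h ▸ hx))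
  have hcS : ∀ (i : Fin n) (u : Finset (Fin n)), i ∉ u → Commute (star (T i)) (Tu u) := by
    intro i u hi
    refine Finset.noncommProd_commute _ _ _ _ fun x hx => ?_
    have hne : x ≠ i := fun h => hi (h ▸ hx)
    show star (T i) * T x = T x * star (T i)
    rw [mul_def, mul_def, star_eq_adjoint]
    exact (hdcomm x i hne).symm
  have key : ∀ s : Finset (Fin n),
      0 ≤ ∑ u ∈ s.powerset, ((-1 : ℂ) ^ u.card) • (star (Tu u) * Tu u) := by
    intro s
    induction s using Finset.induction_on with
    | empty =>
      simp only [Finset.powerset_empty, Finset.sum_singleton, Finset.card_empty, pow_zero,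
        one_smul, hTu, Finset.noncommProd_empty, star_one, mul_one]
      have h0 : (∅ : Finset (Fin n)).noncommProd T (fun a _ b _ hab => hcomm a b hab) = 1 :=
        Finset.noncommProd_empty _ _
      rw [h0, star_one, mul_one]
      exact zero_le_one (α := H →L[ℂ] H)
    | @insert i s hi ih =>
      have hsub : ∀ u ∈ s.powerset, i ∉ u := fun u hu h => hi (Finset.mem_powerset.mp hu h)
      have hdisj : Disjoint s.powerset (Finset.image (insert i) s.powerset) := by
        rw [Finset.disjoint_left]
        intro u hu hu'
        obtain ⟨v, hv, rfl⟩ := Finset.mem_image.mp hu'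
        exact hsub _ hu (Finset.mem_insert_self i v)
      have himg : ∀ x ∈ s.powerset, ∀ y ∈ s.powerset, insert i x = insert i y → x = y := by
        intro x hx y hy h
        rw [← Finset.erase_insert (hsub x hx), h, Finset.erase_insert (hsub y hy)]
      have hQ : ∀ u ∈ s.powerset,
          star (Tu (insert i u)) * Tu (insert i u)
            = (star (Tu u) * Tu u) * (star (T i) * T i) := by
        intro u hu
        have hiu := hsub u hu
        have h1 : Tu (insert i u) = T i * Tu u :=
          Finset.noncommProd_insert_of_notMem _ _ _ _ hiu
        have c3 : Commute (star (T i) * T i) (Tu u) :=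
          (hcS i u hiu).mul_left (hcT i u hiu)
        rw [h1, star_mul, mul_assoc, ← mul_assoc (star (T i)), c3.eq, ← mul_assoc]
      have hterm : ∀ u ∈ s.powerset,
          ((-1 : ℂ) ^ (insert i u).card) • (star (Tu (insert i u)) * Tu (insert i u))
            = -(((-1 : ℂ) ^ u.card) • ((star (Tu u) * Tu u) * (star (T i) * T i))) := by
        intro u hu
        rw [Finset.card_insert_of_notMem (hsub u hu), hQ u hu, pow_succ, mul_neg_one, neg_smul]
      rw [Finset.powerset_insert, Finset.sum_union hdisj, Finset.sum_image himg,
        Finset.sum_congr rfl hterm, Finset.sum_neg_distrib, ← sub_eq_add_neg]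
      have hfac : ∑ u ∈ s.powerset,
          ((-1 : ℂ) ^ u.card) • ((star (Tu u) * Tu u) * (star (T i) * T i))
          = (∑ u ∈ s.powerset, ((-1 : ℂ) ^ u.card) • (star (Tu u) * Tu u))
              * (star (T i) * T i) := by
        rw [Finset.sum_mul]
        exact Finset.sum_congr rfl fun u _ => (smul_mul_assoc _ _ _).symm
      rw [hfac, ← mul_one_sub]
      have hPsR : Commute
          (∑ u ∈ s.powerset, ((-1 : ℂ) ^ u.card) • (star (Tu u) * Tu u))
          (1 - star (T i) * T i) := by
        refine Commute.sum_left _ _ _ fun u hu => ?_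
        have hiu := hsub u hu
        have d1 : Commute (Tu u) (star (T i) * T i) :=
          ((hcS i u hiu).symm).mul_right ((hcT i u hiu).symm)
        have d2 : Commute (star (Tu u)) (star (T i) * T i) := by
          have := d1.star_star
          rwa [star_mul, star_star] at this
        exact ((Commute.one_right _).sub_right ((d2.mul_left d1))).smul_left _
      exact my_mul_nonneg_of_commute ih
        (my_one_sub_star_mul_self_nonneg (T i) (hcontr i)) hPsR
  have := key Finset.univ
  rw [Finset.powerset_univ] at this
  simpa only [star_eq_adjoint, mul_def] using this
end

section
/- Let Ω be a set and let Σ be a subsemigroup of ℝ₊^Ω containing 0 which is +,−-closed. Let T = {T_s}_{s∈Σ} be a semigroup of coisometries on a complex Hilbert space H (i.e., each T_s* is an isometry, T_0 = I, T_s T_t = T_{s+t}). Then there exist a Hilbert space K containing H (via an isometric embedding) and a semigroup of unitaries U = {U_s}_{s∈Σ} on K such that: (1) for all s ∈ Σ − Σ, P_H U_{s₋} U_{s₊}*|_H = T_{s₋} T_{s₊}*, and (2) K is the closed linear span of {U_s h : s ∈ Σ, h ∈ H}. Moreover such a dilation is unique up to unitary equivalence fixing H. -/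
open ContinuousLinearMap

section Aux

variable {Ω : Type}

lemma posPart'_neg (e : Ω → ℝ) : posPart' (-e) = negPart' e := by
  funext j
  simp only [posPart', negPart', Pi.sub_apply, Pi.neg_apply]
  rcases le_total (e j) 0 with h | h
  · rw [max_eq_left (by linarith : (0:ℝ) ≤ -e j), max_eq_right h]; ring
  · rw [max_eq_right (by linarith : -e j ≤ (0:ℝ)), max_eq_left h]; ring

lemma negPart'_neg (e : Ω → ℝ) : negPart' (-e) = posPart' e := by
  rw [← posPart'_neg, neg_neg]

lemma posPart'_zero : posPart' (0 : Ω → ℝ) = 0 := by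
  funext j; simp [posPart']

lemma negPart'_zero : negPart' (0 : Ω → ℝ) = 0 := by
  simp [negPart', posPart'_zero]

lemma posPart'_of_nonneg {s : Ω → ℝ} (h : ∀ j, 0 ≤ s j) : posPart' s = s := by
  funext j; simpa [posPart'] using h j

lemma negPart'_of_nonneg {s : Ω → ℝ} (h : ∀ j, 0 ≤ s j) : negPart' s = 0 := by
  simp [negPart', posPart'_of_nonneg h]

variable {Sig : Set (Ω → ℝ)}

lemma sig_min (hnn : ∀ s ∈ Sig, ∀ j : Ω, 0 ≤ s j)
    (hpm : ∀ a ∈ Sig, ∀ b ∈ Sig, posPart' (a - b) ∈ Sig ∧ negPart' (a - b) ∈ Sig)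
    {s t : Ω → ℝ} (hs : s ∈ Sig) (ht : t ∈ Sig) : s ⊓ t ∈ Sig := by
  have h1 : posPart' (t - s) ∈ Sig := (hpm t ht s hs).1
  have h2 : posPart' (t - posPart' (t - s)) ∈ Sig := (hpm t ht _ h1).1
  have : posPart' (t - posPart' (t - s)) = s ⊓ t := by
    funext j
    simp only [posPart', Pi.sub_apply, Pi.inf_apply]
    rcases le_total (s j) (t j) with h | h
    · rw [show max (t j - s j) 0 = t j - s j from max_eq_left (by linarith),
        show t j - (t j - s j) = s j by ring, max_eq_left (hnn s hs j),
        min_eq_left h]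
    · rw [show max (t j - s j) 0 = 0 from max_eq_right (by linarith), sub_zero,
        max_eq_left (hnn t ht j), min_eq_right h]
  rwa [this] at h2

lemma sig_sum (h0 : (0 : Ω → ℝ) ∈ Sig)
    (hadd : ∀ a ∈ Sig, ∀ b ∈ Sig, a + b ∈ Sig)
    (A : Finset ↥Sig) : (∑ u ∈ A, (u : Ω → ℝ)) ∈ Sig :=
  Finset.sum_induction _ (· ∈ Sig) (fun a b ha hb => hadd a ha b hb) h0
    (fun x _ => x.2)

lemma sig_c (h0 : (0 : Ω → ℝ) ∈ Sig)
    (hnn : ∀ s ∈ Sig, ∀ j : Ω, 0 ≤ s j)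
    (hadd : ∀ a ∈ Sig, ∀ b ∈ Sig, a + b ∈ Sig)
    (hpm : ∀ a ∈ Sig, ∀ b ∈ Sig, posPart' (a - b) ∈ Sig ∧ negPart' (a - b) ∈ Sig)
    (A : Finset ↥Sig) (s t : ↥Sig) (hs : s ∈ A) (ht : t ∈ A) :
    ∃ c ∈ Sig,
      (∑ u ∈ A, (u : Ω → ℝ)) - (t : Ω → ℝ) = negPart' ((t : Ω → ℝ) - (s : Ω → ℝ)) + c ∧
      (∑ u ∈ A, (u : Ω → ℝ)) - (s : Ω → ℝ) = posPart' ((t : Ω → ℝ) - (s : Ω → ℝ)) + c := by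
  classical
  by_cases hst : s = t
  · subst hst
    refine ⟨∑ u ∈ A.erase s, (u : Ω → ℝ), sig_sum h0 hadd _, ?_, ?_⟩ <;>
    · simp only [sub_self, posPart'_zero, negPart'_zero, zero_add,
        ← Finset.sum_erase_add A (fun u => (u : Ω → ℝ)) hs]
      abel
  · have htA : t ∈ A.erase s := Finset.mem_erase.2 ⟨fun h => hst h.symm, ht⟩
    have hsum : (∑ u ∈ (A.erase s).erase t, (u : Ω → ℝ)) =
        (∑ u ∈ A, (u : Ω → ℝ)) - ↑s - ↑t := by
      rw [← Finset.sum_erase_add A _ hs, ← Finset.sum_erase_add (A.erase s) _ htA]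
      abel
    refine ⟨(∑ u ∈ (A.erase s).erase t, (u : Ω → ℝ)) + ((s : Ω → ℝ) ⊓ ↑t),
      hadd _ (sig_sum h0 hadd _) _ (sig_min hnn hpm s.2 t.2), ?_, ?_⟩
    · rw [hsum]
      funext j
      simp only [negPart', posPart', Pi.add_apply, Pi.sub_apply, Pi.inf_apply]
      rcases le_total ((s : Ω → ℝ) j) ((t : Ω → ℝ) j) with h | h
      · rw [show max ((t : Ω → ℝ) j - (s : Ω → ℝ) j) 0 = (t : Ω → ℝ) j - (s : Ω → ℝ) j
          from max_eq_left (by linarith), min_eq_left h]; ring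
      · rw [show max ((t : Ω → ℝ) j - (s : Ω → ℝ) j) 0 = 0
          from max_eq_right (by linarith), min_eq_right h]; ring
    · rw [hsum]
      funext j
      simp only [posPart', Pi.add_apply, Pi.sub_apply, Pi.inf_apply]
      rcases le_total ((s : Ω → ℝ) j) ((t : Ω → ℝ) j) with h | h
      · rw [show max ((t : Ω → ℝ) j - (s : Ω → ℝ) j) 0 = (t : Ω → ℝ) j - (s : Ω → ℝ) j
          from max_eq_left (by linarith), min_eq_left h]; ring
      · rw [show max ((t : Ω → ℝ) j - (s : Ω → ℝ) j) 0 = 0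
          from max_eq_right (by linarith), min_eq_right h]; ring

end Aux

section Ops

variable {Ω H : Type} [NormedAddCommGroup H] [InnerProductSpace ℂ H]
  [CompleteSpace H] {Sig : Set (Ω → ℝ)}

/-- The kernel `k s t = T ((t-s)₋) (T ((t-s)₊))*`. -/
noncomputable def kkop (T : (Ω → ℝ) → H →L[ℂ] H) (s t : Ω → ℝ) : H →L[ℂ] H :=
  T (negPart' (t - s)) ∘L adjoint (T (posPart' (t - s)))

variable {T : (Ω → ℝ) → H →L[ℂ] H}

lemma Tco (hTcoiso : ∀ s ∈ Sig, ∀ x : H, ‖adjoint (T s) x‖ = ‖x‖)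
    {s : Ω → ℝ} (hs : s ∈ Sig) : T s ∘L adjoint (T s) = 1 := by
  ext x
  refine ext_inner_right ℂ fun y => ?_
  have h2 : (inner ℂ (adjoint (T s) x) (adjoint (T s) y) : ℂ) = inner ℂ x y :=
    LinearIsometry.inner_map_map ⟨(adjoint (T s)).toLinearMap, hTcoiso s hs⟩ x y
  calc (inner ℂ ((T s ∘L adjoint (T s)) x) y : ℂ)
      = inner ℂ (adjoint (adjoint (T s)) ((adjoint (T s)) x)) y := by
        rw [adjoint_adjoint]; rfl
    _ = inner ℂ ((adjoint (T s)) x) ((adjoint (T s)) y) := adjoint_inner_left _ _ _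
    _ = inner ℂ x y := h2
    _ = inner ℂ ((1 : H →L[ℂ] H) x) y := rfl

lemma kk_self (hT0 : T 0 = 1) (s : Ω → ℝ) : kkop T s s = 1 := by
  rw [kkop, sub_self, posPart'_zero, negPart'_zero, hT0]
  change 1 ∘L adjoint (ContinuousLinearMap.id ℂ H) = 1
  rw [adjoint_id]
  rfl

lemma kk_adjoint (s t : Ω → ℝ) : adjoint (kkop T s t) = kkop T t s := by
  rw [kkop, kkop, adjoint_comp, adjoint_adjoint,
    show s - t = -(t - s) by ring, posPart'_neg, negPart'_neg]

lemma kk_pair (hTsg : ∀ a ∈ Sig, ∀ b ∈ Sig, T (a + b) = T a ∘L T b)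
    (hTcoiso : ∀ s ∈ Sig, ∀ x : H, ‖adjoint (T s) x‖ = ‖x‖)
    (hpm : ∀ a ∈ Sig, ∀ b ∈ Sig, posPart' (a - b) ∈ Sig ∧ negPart' (a - b) ∈ Sig)
    {s t c : Ω → ℝ} (hs : s ∈ Sig) (ht : t ∈ Sig) (hc : c ∈ Sig) :
    T (negPart' (t - s) + c) ∘L adjoint (T (posPart' (t - s) + c)) = kkop T s t := by
  have hep : posPart' (t - s) ∈ Sig := (hpm t ht s hs).1
  have hem : negPart' (t - s) ∈ Sig := (hpm t ht s hs).2
  have hcc : ∀ y, T c (adjoint (T c) y) = y := fun y => by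
    have := Tco hTcoiso hc
    calc T c (adjoint (T c) y) = (T c ∘L adjoint (T c)) y := rfl
    _ = y := by rw [this]; rfl
  rw [hTsg _ hem _ hc, hTsg _ hep _ hc, adjoint_comp]
  ext x
  simp only [coe_comp', Function.comp_apply, kkop, hcc]

end Ops

section ExtendCLM

open UniformSpace

variable {F W : Type*} [SeminormedAddCommGroup F] [NormedSpace ℂ F]
  [NormedAddCommGroup W] [NormedSpace ℂ W] [CompleteSpace W]

/-- Extension of a continuous linear map to the completion. -/
noncomputable def extendCLM (A : F →L[ℂ] W) : Completion F →L[ℂ] W where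
  toFun := Completion.extension A
  map_add' x y := by
    refine Completion.induction_on₂ x y ?_ ?_
    · apply isClosed_eq
      · exact Completion.continuous_extension.comp continuous_add
      · exact ((Completion.continuous_extension.comp continuous_fst).add
          (Completion.continuous_extension.comp continuous_snd))
    · intro a b
      rw [← Completion.coe_add, Completion.extension_coe A.uniformContinuous,
        Completion.extension_coe A.uniformContinuous,
        Completion.extension_coe A.uniformContinuous, map_add]
  map_smul' c x := by
    refine Completion.induction_on x ?_ ?_
    · apply isClosed_eq
      · exact Completion.continuous_extension.comp (continuous_const_smul c)
      · exact Completion.continuous_extension.const_smul c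
    · intro a
      show Completion.extension (⇑A) (c • ((a : F) : Completion F))
          = (RingHom.id ℂ) c • Completion.extension (⇑A) ((a : F) : Completion F)
      rw [← Completion.coe_smul, Completion.extension_coe A.uniformContinuous,
        Completion.extension_coe A.uniformContinuous, map_smul]
      rfl
  cont := Completion.continuous_extension

@[simp] lemma extendCLM_coe (A : F →L[ℂ] W) (f : F) :
    extendCLM A (↑f : Completion F) = A f :=
  Completion.extension_coe A.uniformContinuous f

end ExtendCLM

section PreF

variable {Ω H : Type} [NormedAddCommGroup H] [InnerProductSpace ℂ H]
  [CompleteSpace H] {Sig : Set (Ω → ℝ)}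

/-- The pre-inner product on `↥Sig →₀ H`. -/
noncomputable def innF (T : (Ω → ℝ) → H →L[ℂ] H) (f g : ↥Sig →₀ H) : ℂ :=
  f.sum fun s x => g.sum fun t y => inner ℂ (kkop T ↑s ↑t x) y

variable {T : (Ω → ℝ) → H →L[ℂ] H}

lemma innF_single (s t : ↥Sig) (x y : H) :
    innF T (Finsupp.single s x) (Finsupp.single t y)
      = inner ℂ (kkop T ↑s ↑t x) y := by
  rw [innF, Finsupp.sum_single_index, Finsupp.sum_single_index]
  · simp
  · rw [Finsupp.sum_single_index] <;> simp

lemma innF_add_left (f₁ f₂ g : ↥Sig →₀ H) :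
    innF T (f₁ + f₂) g = innF T f₁ g + innF T f₂ g := by
  rw [innF, innF, innF, Finsupp.sum_add_index']
  · intro a; simp
  · intro a b₁ b₂
    rw [← Finsupp.sum_add]
    congr 1; funext t y
    rw [map_add, inner_add_left]

lemma innF_smul_left (c : ℂ) (f g : ↥Sig →₀ H) :
    innF T (c • f) g = (starRingEnd ℂ) c * innF T f g := by
  rw [innF, innF, Finsupp.sum_smul_index' (fun i => by simp),
    Finsupp.sum, Finsupp.sum, Finset.mul_sum]
  refine Finset.sum_congr rfl fun s hs => ?_
  rw [Finsupp.sum, Finsupp.sum, Finset.mul_sum]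
  refine Finset.sum_congr rfl fun t ht => ?_
  rw [map_smul, inner_smul_left]

lemma innF_conj_symm (f g : ↥Sig →₀ H) :
    (starRingEnd ℂ) (innF T g f) = innF T f g := by
  rw [innF, innF, map_finsuppSum]
  have hterm : ∀ (t : ↥Sig) (y : H),
      (starRingEnd ℂ) (f.sum fun s x => inner ℂ (kkop T ↑t ↑s y) x)
      = f.sum fun s x => (inner ℂ (kkop T ↑s ↑t x) y : ℂ) := by
    intro t y
    rw [map_finsuppSum]
    congr 1; funext s x
    rw [inner_conj_symm, ← adjoint_inner_left, kk_adjoint]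
  simp only [hterm]
  exact Finsupp.sum_comm g f _

lemma innF_shift_aux {r : Ω → ℝ} (hr : r ∈ Sig)
    (hadd : ∀ a ∈ Sig, ∀ b ∈ Sig, a + b ∈ Sig) :
    Function.Injective (fun u : ↥Sig => (⟨↑u + r, hadd _ u.2 _ hr⟩ : ↥Sig)) := by
  intro a b hab
  have : (a : Ω → ℝ) + r = ↑b + r := congrArg Subtype.val hab
  exact Subtype.ext (by exact add_right_cancel this)

lemma innF_shift (hadd : ∀ a ∈ Sig, ∀ b ∈ Sig, a + b ∈ Sig)
    {r : Ω → ℝ} (hr : r ∈ Sig) (f g : ↥Sig →₀ H) :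
    innF T (Finsupp.mapDomain (fun u : ↥Sig => ⟨↑u + r, hadd _ u.2 _ hr⟩) f)
      (Finsupp.mapDomain (fun u : ↥Sig => ⟨↑u + r, hadd _ u.2 _ hr⟩) g)
      = innF T f g := by
  rw [innF, innF, Finsupp.sum_mapDomain_index_inj (innF_shift_aux hr hadd)]
  congr 1; funext s x
  rw [Finsupp.sum_mapDomain_index_inj (innF_shift_aux hr hadd)]
  congr 1; funext t y
  rw [show kkop T (↑s + r) (↑t + r) = kkop T ↑s ↑t from by
    rw [kkop, kkop, add_sub_add_right_eq_sub]]

lemma innF_nonneg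
    (h0 : (0 : Ω → ℝ) ∈ Sig)
    (hnn : ∀ s ∈ Sig, ∀ j : Ω, 0 ≤ s j)
    (hadd : ∀ a ∈ Sig, ∀ b ∈ Sig, a + b ∈ Sig)
    (hpm : ∀ a ∈ Sig, ∀ b ∈ Sig, posPart' (a - b) ∈ Sig ∧ negPart' (a - b) ∈ Sig)
    (hTsg : ∀ a ∈ Sig, ∀ b ∈ Sig, T (a + b) = T a ∘L T b)
    (hTcoiso : ∀ s ∈ Sig, ∀ x : H, ‖adjoint (T s) x‖ = ‖x‖)
    (f : ↥Sig →₀ H) : 0 ≤ RCLike.re (innF T f f) := by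
  classical
  set r : Ω → ℝ := ∑ u ∈ f.support, (u : Ω → ℝ) with hr
  have key : ∀ s ∈ f.support, ∀ t ∈ f.support,
      T (r - ↑t) ∘L adjoint (T (r - ↑s)) = kkop T ↑s ↑t := by
    intro s hs t ht
    obtain ⟨c, hc, h1, h2⟩ := sig_c h0 hnn hadd hpm f.support s t hs ht
    rw [← hr] at h1 h2
    rw [h1, h2]
    exact kk_pair hTsg hTcoiso hpm s.2 t.2 hc
  have hexp : innF T f f =
      inner ℂ (∑ s ∈ f.support, adjoint (T (r - ↑s)) (f s))
        (∑ t ∈ f.support, adjoint (T (r - ↑t)) (f t)) := by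
    rw [sum_inner]
    rw [innF, Finsupp.sum]
    refine Finset.sum_congr rfl fun s hs => ?_
    rw [inner_sum, Finsupp.sum]
    refine Finset.sum_congr rfl fun t ht => ?_
    rw [← key s hs t ht, ContinuousLinearMap.comp_apply]
    exact (adjoint_inner_right _ _ _).symm
  rw [hexp]
  exact inner_self_nonneg

end PreF

set_option maxHeartbeats 2000000 in
/-- **Unitary dilation of a multiparameter semigroup of coisometries.**
A semigroup of coisometries over a `+,-`-closed unital subsemigroup `Sig ⊆ ℝ₊^Ω`
admits a unitary dilation `U` on `K ⊇ H` with
`P_H U_{s₋} U_{s₊}* |_H = T_{s₋} T_{s₊}*` for all `s ∈ Sig − Sig`, with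
`K = ⋁_{s ∈ Sig} U_s H`; such a dilation is unique up to unitary equivalence
fixing `H`. -/
theorem coisometric_semigroup_has_unique_minimal_unitary_dilation
    {Ω : Type} {H : Type} [NormedAddCommGroup H] [InnerProductSpace ℂ H]
    [CompleteSpace H]
    (Sig : Set (Ω → ℝ))
    (hnn : ∀ s ∈ Sig, ∀ j : Ω, 0 ≤ s j)
    (h0 : (0 : Ω → ℝ) ∈ Sig)
    (hadd : ∀ a ∈ Sig, ∀ b ∈ Sig, a + b ∈ Sig)
    (hpm : ∀ a ∈ Sig, ∀ b ∈ Sig, posPart' (a - b) ∈ Sig ∧ negPart' (a - b) ∈ Sig)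
    -- `T` is a semigroup of coisometries on `H` over `Sig`
    (T : (Ω → ℝ) → H →L[ℂ] H)
    (hT0 : T 0 = 1)
    (hTsg : ∀ a ∈ Sig, ∀ b ∈ Sig, T (a + b) = T a ∘L T b)
    (hTcoiso : ∀ s ∈ Sig, ∀ x : H, ‖adjoint (T s) x‖ = ‖x‖) :
    ∃ (K : Type) (_ : NormedAddCommGroup K) (_ : InnerProductSpace ℂ K)
      (_ : CompleteSpace K) (ι : H →L[ℂ] K) (U : (Ω → ℝ) → K →L[ℂ] K),
      -- `ι` is an isometric embedding of `H` into `K`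
      (∀ h : H, ‖ι h‖ = ‖h‖) ∧
      -- `U` is a semigroup of unitaries over `Sig`
      U 0 = 1 ∧
      (∀ a ∈ Sig, ∀ b ∈ Sig, U (a + b) = U a ∘L U b) ∧
      (∀ s ∈ Sig, U s ∘L adjoint (U s) = 1 ∧ adjoint (U s) ∘L U s = 1) ∧
      -- (1) for all `s = a - b ∈ Sig − Sig`, `P_H U_{s₋} U_{s₊}* |_H = T_{s₋} T_{s₊}*`
      (∀ a ∈ Sig, ∀ b ∈ Sig,
        adjoint ι ∘L (U (negPart' (a - b)) ∘L adjoint (U (posPart' (a - b)))) ∘L ι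
          = T (negPart' (a - b)) ∘L adjoint (T (posPart' (a - b)))) ∧
      -- (2) `K = ⋁_{s ∈ Sig} U_s H`
      (Submodule.span ℂ
        {x : K | ∃ s ∈ Sig, ∃ h : H, x = U s (ι h)}).topologicalClosure = ⊤ ∧
      -- uniqueness up to a unitary equivalence fixing `H`
      (∀ (K' : Type) (_ : NormedAddCommGroup K') (_ : InnerProductSpace ℂ K')
          (_ : CompleteSpace K') (ι' : H →L[ℂ] K') (U' : (Ω → ℝ) → K' →L[ℂ] K'),
        (∀ h : H, ‖ι' h‖ = ‖h‖) →
        U' 0 = 1 →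
        (∀ a ∈ Sig, ∀ b ∈ Sig, U' (a + b) = U' a ∘L U' b) →
        (∀ s ∈ Sig, U' s ∘L adjoint (U' s) = 1 ∧ adjoint (U' s) ∘L U' s = 1) →
        (∀ a ∈ Sig, ∀ b ∈ Sig,
          adjoint ι' ∘L (U' (negPart' (a - b)) ∘L adjoint (U' (posPart' (a - b)))) ∘L ι'
            = T (negPart' (a - b)) ∘L adjoint (T (posPart' (a - b)))) →
        (Submodule.span ℂ
          {x : K' | ∃ s ∈ Sig, ∃ h : H, x = U' s (ι' h)}).topologicalClosure = ⊤ →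
        ∃ W : K ≃ₗᵢ[ℂ] K',
          (∀ h : H, W (ι h) = ι' h) ∧ ∀ s ∈ Sig, ∀ x : K, W (U s x) = U' s (W x)) := by
  classical
  letI cF : PreInnerProductSpace.Core ℂ (↥Sig →₀ H) :=
    { inner := innF T
      conj_inner_symm := innF_conj_symm
      re_inner_nonneg := innF_nonneg h0 hnn hadd hpm hTsg hTcoiso
      add_left := innF_add_left
      smul_left := fun f g c => innF_smul_left c f g }
  letI : SeminormedAddCommGroup (↥Sig →₀ H) :=
    @InnerProductSpace.Core.toSeminormedAddCommGroup ℂ _ _ _ _ cF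
  letI : NormedSpace ℂ (↥Sig →₀ H) :=
    @InnerProductSpace.Core.toNormedSpace ℂ _ _ _ _ cF
  letI : InnerProductSpace ℂ (↥Sig →₀ H) :=
    { toNormedSpace := inferInstance
      toInner := cF.toInner
      norm_sq_eq_re_inner := fun x => Real.sq_sqrt (cF.re_inner_nonneg x)
      conj_inner_symm := cF.conj_inner_symm
      add_left := cF.add_left
      smul_left := cF.smul_left }
  have hinnF : ∀ f g : ↥Sig →₀ H, (inner ℂ f g : ℂ) = innF T f g := fun _ _ => rfl
  have hnormsingle : ∀ (u : ↥Sig) (x : H),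
      ‖(Finsupp.single u x : ↥Sig →₀ H)‖ = ‖x‖ := by
    intro u x
    rw [@norm_eq_sqrt_re_inner ℂ, hinnF, innF_single, kk_self hT0,
      show ((1 : H →L[ℂ] H) x) = x from rfl, ← @norm_eq_sqrt_re_inner ℂ]
  let ι : H →L[ℂ] UniformSpace.Completion (↥Sig →₀ H) :=
    UniformSpace.Completion.toComplL ∘L
      LinearMap.mkContinuous (Finsupp.lsingle (⟨0, h0⟩ : ↥Sig)) 1
        (fun x => by
          rw [show (Finsupp.lsingle (⟨0, h0⟩ : ↥Sig)) x
              = Finsupp.single (⟨0, h0⟩ : ↥Sig) x from rfl, hnormsingle, one_mul])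
  let σ : ↥Sig → (↥Sig →₀ H) →L[ℂ] (↥Sig →₀ H) := fun r =>
    LinearMap.mkContinuous
      (Finsupp.lmapDomain H ℂ (fun u : ↥Sig => ⟨↑u + ↑r, hadd _ u.2 _ r.2⟩)) 1
      (fun f => by
        rw [one_mul, @norm_eq_sqrt_re_inner ℂ, @norm_eq_sqrt_re_inner ℂ (x := f), hinnF, hinnF]
        simp only [Finsupp.lmapDomain_apply]
        rw [innF_shift hadd r.2])
  let U : (Ω → ℝ) →
      UniformSpace.Completion (↥Sig →₀ H) →L[ℂ] UniformSpace.Completion (↥Sig →₀ H) :=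
    fun r => if hr : r ∈ Sig
      then extendCLM (UniformSpace.Completion.toComplL ∘L σ ⟨r, hr⟩) else 1
  have hσapply : ∀ (r : ↥Sig) (f : ↥Sig →₀ H),
      σ r f = Finsupp.mapDomain (fun u : ↥Sig => ⟨↑u + ↑r, hadd _ u.2 _ r.2⟩) f :=
    fun r f => rfl
  have hσsingle : ∀ (r u : ↥Sig) (x : H),
      σ r (Finsupp.single u x)
        = Finsupp.single (⟨↑u + ↑r, hadd _ u.2 _ r.2⟩ : ↥Sig) x := by
    intro r u x
    rw [hσapply, Finsupp.mapDomain_single]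
  have hUcoe : ∀ (r : Ω → ℝ) (hr : r ∈ Sig) (f : ↥Sig →₀ H),
      U r (↑f) = (↑(σ ⟨r, hr⟩ f) : UniformSpace.Completion (↥Sig →₀ H)) := by
    intro r hr f
    show (if hr' : r ∈ Sig
      then extendCLM (UniformSpace.Completion.toComplL ∘L σ ⟨r, hr'⟩) else 1) (↑f)
      = (↑(σ ⟨r, hr⟩ f) : UniformSpace.Completion (↥Sig →₀ H))
    rw [dif_pos hr, extendCLM_coe]
    rfl
  have hιdef : ∀ h : H,
      ι h = (↑(Finsupp.single (⟨0, h0⟩ : ↥Sig) h) : UniformSpace.Completion (↥Sig →₀ H)) :=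
    fun h => rfl
  -- U is a semigroup with U 0 = 1
  have hU0 : U 0 = 1 := by
    ext x
    refine UniformSpace.Completion.induction_on x ?_ ?_
    · exact isClosed_eq (U 0).continuous (1 : UniformSpace.Completion (↥Sig →₀ H) →L[ℂ]
        UniformSpace.Completion (↥Sig →₀ H)).continuous
    · intro f
      rw [hUcoe 0 h0 f]
      have hid : σ ⟨0, h0⟩ f = f := by
        rw [hσapply]
        have : (fun u : ↥Sig => (⟨↑u + ↑(⟨0, h0⟩ : ↥Sig), hadd _ u.2 _ h0⟩ : ↥Sig))
            = _root_.id := funext fun u => Subtype.ext (add_zero _)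
        rw [this, Finsupp.mapDomain_id]
      rw [hid]
      rfl
  have hUsg : ∀ a ∈ Sig, ∀ b ∈ Sig, U (a + b) = U a ∘L U b := by
    intro a ha b hb
    ext x
    refine UniformSpace.Completion.induction_on x ?_ ?_
    · exact isClosed_eq (U (a + b)).continuous ((U a ∘L U b)).continuous
    · intro f
      have hcomp : σ (⟨a + b, hadd a ha b hb⟩ : ↥Sig) f
          = σ ⟨a, ha⟩ (σ ⟨b, hb⟩ f) := by
        induction f using Finsupp.induction_linear with
        | zero => simp only [map_zero]
        | add f g hf hg => simp only [map_add, hf, hg]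
        | single u x =>
          rw [hσsingle, hσsingle, hσsingle]
          exact congrArg (fun v : ↥Sig => Finsupp.single v x)
            (Subtype.ext (show (↑u : Ω → ℝ) + (a + b) = ↑u + b + a by ring))
      have hrhs : (U a ∘L U b) ↑f = (↑(σ ⟨a, ha⟩ (σ ⟨b, hb⟩ f)) :
          UniformSpace.Completion (↥Sig →₀ H)) := by
        show U a (U b ↑f) = _
        rw [hUcoe b hb f, hUcoe a ha]
      rw [hrhs, hUcoe (a + b) (hadd a ha b hb) f, hcomp]
  -- inner ℂ product is preserved by U
  have hUpres : ∀ (r : Ω → ℝ) (hr : r ∈ Sig)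
      (x y : UniformSpace.Completion (↥Sig →₀ H)),
      (inner ℂ (U r x) (U r y) : ℂ) = inner ℂ x y := by
    intro r hr x y
    refine UniformSpace.Completion.induction_on₂ x y ?_ ?_
    · apply isClosed_eq
      · exact Continuous.inner ((U r).continuous.comp continuous_fst)
          ((U r).continuous.comp continuous_snd)
      · exact Continuous.inner continuous_fst continuous_snd
    · intro f g
      rw [hUcoe r hr f, hUcoe r hr g, UniformSpace.Completion.inner_coe,
        UniformSpace.Completion.inner_coe, hinnF, hinnF, hσapply, hσapply,
        innF_shift hadd hr]
  -- the twist identity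
  have htwist : ∀ (s t : ↥Sig) (x : H),
      (↑(Finsupp.single t x) : UniformSpace.Completion (↥Sig →₀ H))
        = U ↑s ↑(Finsupp.single t (adjoint (T ↑s) x)) := by
    intro s t x
    rw [hUcoe ↑s s.2, hσsingle]
    set b : ↥Sig →₀ H :=
      Finsupp.single (⟨↑t + ↑s, hadd _ t.2 _ s.2⟩ : ↥Sig) (adjoint (T ↑s) x) with hbdef
    set a : ↥Sig →₀ H := Finsupp.single t x with hadef
    have k1 : kkop T ↑t (↑t + ↑s) = adjoint (T ↑s) := by
      rw [kkop, add_sub_cancel_left, negPart'_of_nonneg (hnn _ s.2),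
        posPart'_of_nonneg (hnn _ s.2), hT0]
      ext y; rfl
    have k2 : kkop T (↑t + ↑s) ↑t = T ↑s := by
      rw [kkop, show (↑t : Ω → ℝ) - (↑t + ↑s) = -↑s by ring, posPart'_neg,
        negPart'_neg, negPart'_of_nonneg (hnn _ s.2),
        posPart'_of_nonneg (hnn _ s.2), hT0]
      rw [show adjoint (1 : H →L[ℂ] H) = 1 from by
        rw [one_def, adjoint_id]]
      ext y; rfl
    have hTs : ∀ y : H, T ↑s (adjoint (T ↑s) y) = y := by
      intro y
      have := Tco hTcoiso s.2
      calc T ↑s (adjoint (T ↑s) y) = (T ↑s ∘L adjoint (T ↑s)) y := rfl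
        _ = y := by rw [this]; rfl
    have hz : (inner ℂ (a - b) (a - b) : ℂ) = 0 := by
      rw [inner_sub_sub_self, hinnF, hinnF, hinnF, hinnF, hadef, hbdef,
        innF_single, innF_single, innF_single, innF_single]
      have e1 : (inner ℂ (kkop T ↑t ↑t x) x : ℂ) = inner ℂ x x := by
        rw [kk_self hT0]; rfl
      have e2 : (inner ℂ (kkop T ↑t ↑(⟨↑t + ↑s, hadd _ t.2 _ s.2⟩ : ↥Sig) x)
          (adjoint (T ↑s) x) : ℂ) = inner ℂ (adjoint (T ↑s) x) (adjoint (T ↑s) x) := by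
        rw [show ↑(⟨↑t + ↑s, hadd _ t.2 _ s.2⟩ : ↥Sig) = (↑t + ↑s : Ω → ℝ) from rfl, k1]
      have e3 : (inner ℂ (kkop T ↑(⟨↑t + ↑s, hadd _ t.2 _ s.2⟩ : ↥Sig) ↑t
          (adjoint (T ↑s) x)) x : ℂ) = inner ℂ x x := by
        rw [show ↑(⟨↑t + ↑s, hadd _ t.2 _ s.2⟩ : ↥Sig) = (↑t + ↑s : Ω → ℝ) from rfl,
          k2, hTs]
      have e4 : (inner ℂ (kkop T ↑(⟨↑t + ↑s, hadd _ t.2 _ s.2⟩ : ↥Sig)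
          ↑(⟨↑t + ↑s, hadd _ t.2 _ s.2⟩ : ↥Sig) (adjoint (T ↑s) x))
          (adjoint (T ↑s) x) : ℂ)
          = inner ℂ (adjoint (T ↑s) x) (adjoint (T ↑s) x) := by
        rw [kk_self hT0]; rfl
      rw [e1, e2, e3, e4]
      ring
    have hnz : ‖a - b‖ = 0 := by
      rw [@norm_eq_sqrt_re_inner ℂ, hz]
      simp
    have : (↑a : UniformSpace.Completion (↥Sig →₀ H)) - ↑b = 0 := by
      rw [← UniformSpace.Completion.coe_sub, ← norm_eq_zero,
        UniformSpace.Completion.norm_coe, hnz]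
    exact sub_eq_zero.mp this
  -- surjectivity of U s
  have hUnorm : ∀ (r : Ω → ℝ) (hr : r ∈ Sig) z, ‖U r z‖ = ‖z‖ := by
    intro r hr z
    rw [@norm_eq_sqrt_re_inner ℂ, @norm_eq_sqrt_re_inner ℂ (x := z), hUpres r hr]
  have hUsurj : ∀ (r : Ω → ℝ) (hr : r ∈ Sig), Function.Surjective (U r) := by
    intro r hr
    have hclosed : IsClosed (Set.range (U r)) :=
      ((⟨(U r).toLinearMap, hUnorm r hr⟩ :
        UniformSpace.Completion (↥Sig →₀ H) →ₗᵢ[ℂ]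
          UniformSpace.Completion (↥Sig →₀ H)).isometry.isUniformInducing.isComplete_range).isClosed
    have hmemF : ∀ f : ↥Sig →₀ H,
        (↑f : UniformSpace.Completion (↥Sig →₀ H)) ∈ Set.range (U r) := by
      intro f
      induction f using Finsupp.induction_linear with
      | zero => exact ⟨0, by rw [map_zero, UniformSpace.Completion.coe_zero]⟩
      | add f g hf hg =>
        obtain ⟨c, hc⟩ := hf; obtain ⟨d, hd⟩ := hg
        exact ⟨c + d, by rw [map_add, hc, hd, UniformSpace.Completion.coe_add]⟩
      | single u x =>
        exact ⟨↑(Finsupp.single u (adjoint (T r) x)), (htwist ⟨r, hr⟩ u x).symm⟩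
    have huniv : Set.range (U r) = Set.univ := by
      refine Set.eq_univ_of_univ_subset ?_
      rw [← (UniformSpace.Completion.denseRange_coe
        (α := (↥Sig →₀ H))).closure_eq]
      refine closure_minimal ?_ hclosed
      rintro _ ⟨f, rfl⟩
      exact hmemF f
    intro z
    have : z ∈ Set.range (U r) := huniv ▸ Set.mem_univ z
    exact this
  -- unitarity
  have hUuni : ∀ s ∈ Sig, U s ∘L adjoint (U s) = 1 ∧ adjoint (U s) ∘L U s = 1 := by
    intro s hs
    have h2 : adjoint (U s) ∘L U s = 1 := by
      ext x
      refine ext_inner_right ℂ fun y => ?_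
      calc (inner ℂ ((adjoint (U s) ∘L U s) x) y : ℂ)
          = inner ℂ (adjoint (U s) (U s x)) y := rfl
        _ = inner ℂ (U s x) (U s y) := adjoint_inner_left _ _ _
        _ = inner ℂ x y := hUpres s hs x y
        _ = inner ℂ ((1 : UniformSpace.Completion (↥Sig →₀ H) →L[ℂ]
            UniformSpace.Completion (↥Sig →₀ H)) x) y := rfl
    have h1 : U s ∘L adjoint (U s) = 1 := by
      ext x
      obtain ⟨y, rfl⟩ := hUsurj s hs x
      have h2y : adjoint (U s) (U s y) = y := by
        calc adjoint (U s) (U s y) = (adjoint (U s) ∘L U s) y := rfl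
          _ = y := by rw [h2]; rfl
      calc (U s ∘L adjoint (U s)) (U s y) = U s (adjoint (U s) (U s y)) := rfl
        _ = U s y := by rw [h2y]
        _ = (1 : UniformSpace.Completion (↥Sig →₀ H) →L[ℂ]
            UniformSpace.Completion (↥Sig →₀ H)) (U s y) := rfl
    exact ⟨h1, h2⟩
  -- adjoint of U acting on ι
  have hVU : ∀ (r : Ω → ℝ) (hr : r ∈ Sig) (h : H),
      adjoint (U r) (ι h) = ι (adjoint (T r) h) := by
    intro r hr h
    have ht := htwist ⟨r, hr⟩ (⟨0, h0⟩ : ↥Sig) h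
    rw [← hιdef, ← hιdef] at ht
    rw [ht]
    calc adjoint (U r) (U r (ι (adjoint (T r) h)))
        = (adjoint (U r) ∘L U r) (ι (adjoint (T r) h)) := rfl
      _ = ι (adjoint (T r) h) := by rw [(hUuni r hr).2]; rfl
  -- the dilation property
  have hdil : ∀ a ∈ Sig, ∀ b ∈ Sig,
      adjoint ι ∘L (U (negPart' (a - b)) ∘L adjoint (U (posPart' (a - b)))) ∘L ι
        = T (negPart' (a - b)) ∘L adjoint (T (posPart' (a - b))) := by
    intro a ha b hb
    have hep : posPart' (a - b) ∈ Sig := (hpm a ha b hb).1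
    have hem : negPart' (a - b) ∈ Sig := (hpm a ha b hb).2
    ext h
    refine ext_inner_right ℂ fun g => ?_
    calc (inner ℂ ((adjoint ι ∘L (U (negPart' (a - b))
            ∘L adjoint (U (posPart' (a - b)))) ∘L ι) h) g : ℂ)
        = inner ℂ (adjoint ι (U (negPart' (a - b))
            (adjoint (U (posPart' (a - b))) (ι h)))) g := rfl
      _ = inner ℂ (U (negPart' (a - b)) (adjoint (U (posPart' (a - b))) (ι h))) (ι g) :=
          adjoint_inner_left _ _ _
      _ = inner ℂ (U (negPart' (a - b)) (ι (adjoint (T (posPart' (a - b))) h))) (ι g) := by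
          rw [hVU _ hep]
      _ = inner ℂ (ι (adjoint (T (posPart' (a - b))) h))
            (adjoint (U (negPart' (a - b))) (ι g)) :=
          (adjoint_inner_right _ _ _).symm
      _ = inner ℂ (ι (adjoint (T (posPart' (a - b))) h))
            (ι (adjoint (T (negPart' (a - b))) g)) := by rw [hVU _ hem]
      _ = innF T (Finsupp.single (⟨0, h0⟩ : ↥Sig) (adjoint (T (posPart' (a - b))) h))
            (Finsupp.single (⟨0, h0⟩ : ↥Sig) (adjoint (T (negPart' (a - b))) g)) := by
          rw [hιdef, hιdef, UniformSpace.Completion.inner_coe, hinnF]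
      _ = inner ℂ (kkop T ↑(⟨0, h0⟩ : ↥Sig) ↑(⟨0, h0⟩ : ↥Sig)
            (adjoint (T (posPart' (a - b))) h)) (adjoint (T (negPart' (a - b))) g) :=
          innF_single _ _ _ _
      _ = inner ℂ (adjoint (T (posPart' (a - b))) h) (adjoint (T (negPart' (a - b))) g) := by
          rw [kk_self hT0]; rfl
      _ = inner ℂ (T (negPart' (a - b)) (adjoint (T (posPart' (a - b))) h)) g :=
          adjoint_inner_right _ _ _
      _ = inner ℂ ((T (negPart' (a - b)) ∘L adjoint (T (posPart' (a - b)))) h) g := rfl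
  -- minimality
  have hsinglespan : ∀ (u : ↥Sig) (x : H),
      (↑(Finsupp.single u x) : UniformSpace.Completion (↥Sig →₀ H)) ∈
        Submodule.span ℂ {z : UniformSpace.Completion (↥Sig →₀ H) |
          ∃ s ∈ Sig, ∃ h : H, z = U s (ι h)} := by
    intro u x
    apply Submodule.subset_span
    refine ⟨↑u, u.2, x, ?_⟩
    rw [hιdef, hUcoe ↑u u.2, hσsingle]
    exact congrArg _ (congrArg (fun v : ↥Sig => Finsupp.single v x)
      (Subtype.ext (zero_add (↑u : Ω → ℝ)).symm))
  have hcoespan : ∀ f : ↥Sig →₀ H,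
      (↑f : UniformSpace.Completion (↥Sig →₀ H)) ∈
        Submodule.span ℂ {z : UniformSpace.Completion (↥Sig →₀ H) |
          ∃ s ∈ Sig, ∃ h : H, z = U s (ι h)} := by
    intro f
    induction f using Finsupp.induction_linear with
    | zero =>
      rw [UniformSpace.Completion.coe_zero]
      exact Submodule.zero_mem _
    | add f g hf hg =>
      rw [UniformSpace.Completion.coe_add]
      exact Submodule.add_mem _ hf hg
    | single u x => exact hsinglespan u x
  have hmin : (Submodule.span ℂ {z : UniformSpace.Completion (↥Sig →₀ H) |
      ∃ s ∈ Sig, ∃ h : H, z = U s (ι h)}).topologicalClosure = ⊤ := by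
    apply SetLike.coe_injective
    rw [Submodule.topologicalClosure_coe, Submodule.top_coe]
    refine Set.eq_univ_of_univ_subset ?_
    rw [← (UniformSpace.Completion.denseRange_coe (α := (↥Sig →₀ H))).closure_eq]
    refine closure_mono ?_
    rintro _ ⟨f, rfl⟩
    exact hcoespan f
  refine ⟨UniformSpace.Completion (↥Sig →₀ H), inferInstance, inferInstance,
    inferInstance, ι, U, ?_, hU0, hUsg, hUuni, hdil, hmin, ?_⟩
  · intro h
    rw [hιdef, UniformSpace.Completion.norm_coe, hnormsingle]
  -- uniqueness
  intro K' instK'1 instK'2 instK'3 ι' U' hι' hU'0 hU'sg hU'uni hU'dil hU'min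
  have hU'pres : ∀ r ∈ Sig, ∀ u v : K',
      (inner ℂ (U' r u) (U' r v) : ℂ) = inner ℂ u v := by
    intro r hr u v
    calc (inner ℂ (U' r u) (U' r v) : ℂ)
        = inner ℂ u (adjoint (U' r) (U' r v)) := (adjoint_inner_right _ _ _).symm
      _ = inner ℂ u ((adjoint (U' r) ∘L U' r) v) := rfl
      _ = inner ℂ u v := by rw [(hU'uni r hr).2]; rfl
  have hU'comm : ∀ p ∈ Sig, ∀ q ∈ Sig, ∀ z : K',
      adjoint (U' p) (U' q z) = U' q (adjoint (U' p) z) := by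
    intro p hp q hq z
    have hc : ∀ w : K', U' q (U' p w) = U' p (U' q w) := by
      intro w
      calc U' q (U' p w) = U' (q + p) w := by rw [hU'sg q hq p hp]; rfl
        _ = U' (p + q) w := by rw [add_comm q p]
        _ = U' p (U' q w) := by rw [hU'sg p hp q hq]; rfl
    have hppa : ∀ v : K', U' p (adjoint (U' p) v) = v := by
      intro v
      calc U' p (adjoint (U' p) v) = (U' p ∘L adjoint (U' p)) v := rfl
        _ = v := by rw [(hU'uni p hp).1]; rfl
    have hpap : ∀ v : K', adjoint (U' p) (U' p v) = v := by
      intro v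
      calc adjoint (U' p) (U' p v) = (adjoint (U' p) ∘L U' p) v := rfl
        _ = v := by rw [(hU'uni p hp).2]; rfl
    calc adjoint (U' p) (U' q z)
        = adjoint (U' p) (U' q (U' p (adjoint (U' p) z))) := by rw [hppa z]
      _ = adjoint (U' p) (U' p (U' q (adjoint (U' p) z))) := by rw [hc]
      _ = U' q (adjoint (U' p) z) := hpap _
  have hkkp' : ∀ (s t : ↥Sig) (x y : H),
      (inner ℂ (U' ↑s (ι' x)) (U' ↑t (ι' y)) : ℂ) = inner ℂ (kkop T ↑s ↑t x) y := by
    intro s t x y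
    set ep := posPart' ((t : Ω → ℝ) - (s : Ω → ℝ)) with hepdef
    set em := negPart' ((t : Ω → ℝ) - (s : Ω → ℝ)) with hemdef
    have hep : ep ∈ Sig := (hpm ↑t t.2 ↑s s.2).1
    have hem : em ∈ Sig := (hpm ↑t t.2 ↑s s.2).2
    have hbal : em + ↑t = ↑s + ep := by
      rw [hemdef, hepdef, negPart']
      ring
    have h1 : negPart' ((s : Ω → ℝ) - (t : Ω → ℝ)) = ep := by
      rw [show (s : Ω → ℝ) - (t : Ω → ℝ) = -((t : Ω → ℝ) - (s : Ω → ℝ)) by ring,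
        negPart'_neg, hepdef]
    have h2 : posPart' ((s : Ω → ℝ) - (t : Ω → ℝ)) = em := by
      rw [show (s : Ω → ℝ) - (t : Ω → ℝ) = -((t : Ω → ℝ) - (s : Ω → ℝ)) by ring,
        posPart'_neg, hemdef]
    have hd := hU'dil ↑s s.2 ↑t t.2
    rw [h1, h2] at hd
    have hkk : kkop T ↑s ↑t = T em ∘L adjoint (T ep) := by
      rw [kkop, ← hepdef, ← hemdef]
    calc (inner ℂ (U' ↑s (ι' x)) (U' ↑t (ι' y)) : ℂ)
        = inner ℂ (U' em (U' ↑s (ι' x))) (U' em (U' ↑t (ι' y))) :=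
          (hU'pres em hem _ _).symm
      _ = inner ℂ (U' (em + ↑s) (ι' x)) (U' (em + ↑t) (ι' y)) := by
          rw [hU'sg em hem ↑s s.2, hU'sg em hem ↑t t.2]; rfl
      _ = inner ℂ (U' (em + ↑s) (ι' x)) (U' (↑s + ep) (ι' y)) := by rw [hbal]
      _ = inner ℂ (U' ↑s (U' em (ι' x))) (U' ↑s (U' ep (ι' y))) := by
          rw [show em + (↑s : Ω → ℝ) = ↑s + em from add_comm _ _,
            hU'sg ↑s s.2 em hem, hU'sg ↑s s.2 ep hep]; rfl
      _ = inner ℂ (U' em (ι' x)) (U' ep (ι' y)) := hU'pres ↑s s.2 _ _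
      _ = inner ℂ (ι' x) (adjoint (U' em) (U' ep (ι' y))) :=
          (adjoint_inner_right _ _ _).symm
      _ = inner ℂ (ι' x) (U' ep (adjoint (U' em) (ι' y))) := by
          rw [hU'comm em hem ep hep]
      _ = inner ℂ x (adjoint ι' ((U' ep ∘L adjoint (U' em)) (ι' y))) :=
          (adjoint_inner_right ι' x _).symm
      _ = inner ℂ x ((adjoint ι' ∘L (U' ep ∘L adjoint (U' em)) ∘L ι') y) := rfl
      _ = inner ℂ x ((T ep ∘L adjoint (T em)) y) := by rw [hd]
      _ = inner ℂ (adjoint (T ep ∘L adjoint (T em)) x) y :=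
          (adjoint_inner_left _ y x).symm
      _ = inner ℂ (kkop T ↑s ↑t x) y := by
          rw [adjoint_comp, adjoint_adjoint, ← hkk]
  -- the intertwining map on the finitely supported level
  set w : (↥Sig →₀ H) →ₗ[ℂ] K' :=
    Finsupp.lsum ℂ (fun u : ↥Sig => ((U' ↑u).comp ι').toLinearMap) with hwdef
  have hwsingle : ∀ (u : ↥Sig) (x : H),
      w (Finsupp.single u x) = U' ↑u (ι' x) := by
    intro u x
    rw [hwdef, Finsupp.lsum_single]
    rfl
  have hwsum : ∀ f : ↥Sig →₀ H,
      w f = ∑ u ∈ f.support, U' ↑u (ι' (f u)) := by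
    intro f
    rw [hwdef, Finsupp.lsum_apply]
    rfl
  have hwinner : ∀ f g : ↥Sig →₀ H,
      (inner ℂ (w f) (w g) : ℂ) = innF T f g := by
    intro f g
    rw [hwsum, hwsum, sum_inner, innF, Finsupp.sum]
    refine Finset.sum_congr rfl fun s hs => ?_
    rw [inner_sum, Finsupp.sum]
    refine Finset.sum_congr rfl fun t ht => ?_
    exact hkkp' s t (f s) (g t)
  have hwnorm : ∀ f : ↥Sig →₀ H, ‖w f‖ = ‖f‖ := by
    intro f
    rw [@norm_eq_sqrt_re_inner ℂ, hwinner, @norm_eq_sqrt_re_inner ℂ (x := f), hinnF]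
  set wC : (↥Sig →₀ H) →L[ℂ] K' :=
    LinearMap.mkContinuous w 1 (fun f => by rw [hwnorm, one_mul]) with hwCdef
  set W0 : UniformSpace.Completion (↥Sig →₀ H) →L[ℂ] K' := extendCLM wC with hW0def
  have hW0coe : ∀ f : ↥Sig →₀ H, W0 ↑f = w f := fun f => extendCLM_coe wC f
  have hW0norm : ∀ z, ‖W0 z‖ = ‖z‖ := by
    intro z
    refine UniformSpace.Completion.induction_on z ?_ ?_
    · exact isClosed_eq W0.continuous.norm continuous_norm
    · intro f
      rw [hW0coe, hwnorm, UniformSpace.Completion.norm_coe]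
  set li : UniformSpace.Completion (↥Sig →₀ H) →ₗᵢ[ℂ] K' :=
    ⟨W0.toLinearMap, hW0norm⟩ with hlidef
  have hsurj : Function.Surjective li := by
    have hclosed : IsClosed (Set.range li) :=
      (li.isometry.isUniformInducing.isComplete_range).isClosed
    have hgen : {z : K' | ∃ s ∈ Sig, ∃ h : H, z = U' s (ι' h)} ⊆ Set.range li := by
      rintro z ⟨s, hs, h, rfl⟩
      refine ⟨↑(Finsupp.single (⟨s, hs⟩ : ↥Sig) h), ?_⟩
      show W0 ↑(Finsupp.single (⟨s, hs⟩ : ↥Sig) h) = U' s (ι' h)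
      rw [hW0coe, hwsingle]
    have hspan : (Submodule.span ℂ
        {z : K' | ∃ s ∈ Sig, ∃ h : H, z = U' s (ι' h)} : Set K') ⊆ Set.range li := by
      have : Submodule.span ℂ {z : K' | ∃ s ∈ Sig, ∃ h : H, z = U' s (ι' h)}
          ≤ LinearMap.range (W0 : UniformSpace.Completion (↥Sig →₀ H) →ₗ[ℂ] K') := by
        rw [Submodule.span_le]
        intro z hz
        obtain ⟨y, hy⟩ := hgen hz
        exact ⟨y, hy⟩
      intro z hz
      obtain ⟨y, hy⟩ := this hz
      exact ⟨y, hy⟩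
    have huniv : Set.range li = Set.univ := by
      refine Set.eq_univ_of_univ_subset ?_
      have hclos := congrArg (SetLike.coe) hU'min
      rw [Submodule.topologicalClosure_coe, Submodule.top_coe] at hclos
      rw [← hclos]
      exact closure_minimal hspan hclosed
    intro z
    have : z ∈ Set.range li := huniv ▸ Set.mem_univ z
    exact this
  refine ⟨LinearIsometryEquiv.ofSurjective li hsurj, ?_, ?_⟩
  · intro h
    show li (ι h) = ι' h
    show W0 (ι h) = ι' h
    rw [hιdef, hW0coe, hwsingle]
    show U' 0 (ι' h) = ι' h
    rw [hU'0]
    rfl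
  · intro s hs x
    show li (U s x) = U' s (li x)
    show W0 (U s x) = U' s (W0 x)
    refine UniformSpace.Completion.induction_on x ?_ ?_
    · exact isClosed_eq (W0.continuous.comp (U s).continuous)
        ((U' s).continuous.comp W0.continuous)
    · intro f
      rw [hUcoe s hs f, hW0coe, hW0coe]
      induction f using Finsupp.induction_linear with
      | zero => simp only [map_zero]
      | add f g hf hg => simp only [map_add, hf, hg]
      | single u x =>
        rw [hσsingle, hwsingle, hwsingle]
        show U' ((↑u : Ω → ℝ) + s) (ι' x) = U' s (U' ↑u (ι' x))
        rw [show (↑u : Ω → ℝ) + s = s + ↑u from add_comm _ _, hU'sg s hs ↑u u.2]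
        rfl
end

section
/- Let K be a complex Hilbert space, H a closed subspace of K, V an isometry of H into H, and U a unitary operator on K such that P_H U|_H = V (where P_H is the orthogonal projection of K onto H). Then U h = V h for every h ∈ H; that is, any unitary dilation of an isometry is an extension of it. -/
open ContinuousLinearMap
open scoped ComplexInnerProductSpace

/-- **A unitary dilation of an isometry is an extension.**
If `H` is a closed subspace of a Hilbert space `K`, `V` is an isometry of `H` into
`H`, and `U` is a unitary on `K` with `P_H U|_H = V`, then `U h = V h` for all
`h ∈ H`. -/
theorem unitary_dilation_of_isometry_is_extension
    {K : Type} [NormedAddCommGroup K] [InnerProductSpace ℂ K] [CompleteSpace K]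
    (H : Submodule ℂ K) [CompleteSpace H]
    (V : H →L[ℂ] H) (hV : ∀ h : H, ‖V h‖ = ‖h‖)
    (U : K →L[ℂ] K)
    (hU₁ : U ∘L adjoint U = 1) (hU₂ : adjoint U ∘L U = 1)
    (hdil : ∀ h : H, H.orthogonalProjectionOnto (U h) = V h) :
    ∀ h : H, U h = (V h : K) := by
  intro h
  -- U is norm-preserving
  have hadj : adjoint U (U h) = (h : K) := by
    have := congrArg (fun T : K →L[ℂ] K => T (h : K)) hU₂
    simpa using this
  have hnorm : ‖U (h : K)‖ = ‖(h : K)‖ := by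
    have h1 : (inner ℂ (U (h : K)) (U (h : K)) : ℂ) = inner ℂ (h : K) (h : K) := by
      rw [← adjoint_inner_right U, hadj]
    have h2 : ‖U (h : K)‖ ^ 2 = ‖(h : K)‖ ^ 2 := by
      rw [← inner_self_eq_norm_sq (𝕜 := ℂ), ← inner_self_eq_norm_sq (𝕜 := ℂ), h1]
    rw [← Real.sqrt_sq (norm_nonneg (U (h : K))), ← Real.sqrt_sq (norm_nonneg ((h : K))), h2]
  -- Pythagoras
  have hpyth := Submodule.norm_sq_eq_add_norm_sq_projection (U (h : K)) H
  have hproj : ‖(H.orthogonalProjectionOnto (U (h : K)) : H)‖ = ‖(h : K)‖ := by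
    rw [hdil h, hV h, Submodule.norm_coe]
  rw [hnorm, hproj] at hpyth
  have hzero : ‖(Hᗮ.orthogonalProjectionOnto (U (h : K)) : Hᗮ)‖ = 0 := by
    have : ‖(Hᗮ.orthogonalProjectionOnto (U (h : K)) : Hᗮ)‖ ^ 2 = 0 := by linarith
    exact pow_eq_zero_iff (by norm_num) |>.mp this
  have hperp : (Hᗮ.orthogonalProjectionOnto (U (h : K)) : K) = 0 := by
    have := norm_eq_zero.mp hzero
    simp [this]
  have hdecomp : (H.orthogonalProjectionOnto (U (h : K)) : K) + (Hᗮ.orthogonalProjectionOnto (U (h : K)) : K) = U (h : K) :=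
    Submodule.starProjection_add_starProjection_orthogonal (K := H) (U (h : K))
  rw [hperp, add_zero, hdil h] at hdecomp
  exact hdecomp.symm
end
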